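/- arXiv:0808.2657 — 6 statements merged into one kernel-verified Lean document; each statement's English description precedes it below -/
import Mathlib

section
/- Let $M$ be a finitely generated $\mathbb{Z}^n$-graded module over $S=K[x_1,\ldots,x_n]$. Then $\operatorname{sdepth}(M)=n$ if and only if $M$ is a free $S$-module. -/
open MvPolynomial

/-- A `ℤⁿ`-multigrading (by `K`-subspaces) on a module `M` over the polynomial
ring `S = K[x₁,…,xₙ]`: a direct sum decomposition of `M` into `K`-subspaces indexed
by `ℤⁿ`, such that multiplication by a monomial of exponent `c` maps the component
of degree `a` into the component of degree `a + c`. -/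
structure MultiGrading (K : Type*) [Field K] (n : ℕ) (M : Type*) [AddCommGroup M]
    [Module K M] [Module (MvPolynomial (Fin n) K) M]
    [IsScalarTower K (MvPolynomial (Fin n) K) M] where
  deg : (Fin n → ℤ) → Submodule K M
  isInternal : DirectSum.IsInternal deg
  monomial_smul_mem : ∀ (c : Fin n →₀ ℕ) (a : Fin n → ℤ) (m : M),
    m ∈ deg a → (monomial c (1 : K)) • m ∈ deg (a + fun i => (c i : ℤ))

variable {K : Type*} [Field K] {n : ℕ} {M : Type*} [AddCommGroup M]
  [Module K M] [Module (MvPolynomial (Fin n) K) M]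
  [IsScalarTower K (MvPolynomial (Fin n) K) M]

/-- The `K`-subspace `m·K[Z]` of `M`, for `m : M` and a set of variables `Z`:
the image of the polynomials supported on `Z` under `p ↦ p • m`. -/
noncomputable def stanleySpace (m : M) (Z : Finset (Fin n)) : Submodule K M :=
  Submodule.map ((LinearMap.toSpanSingleton (MvPolynomial (Fin n) K) M m).restrictScalars K)
    (Subalgebra.toSubmodule (MvPolynomial.supported K (↑Z : Set (Fin n))))

set_option linter.unusedSectionVars false

local notation "S" => MvPolynomial (Fin n) K






lemma smul_mem_stanleySpace_univ (m : M) (p : S) :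
    p • m ∈ stanleySpace (K := K) (n := n) m Finset.univ := by
  refine Submodule.mem_map.2 ⟨p, ?_, rfl⟩
  simp [Finset.coe_univ, MvPolynomial.supported_univ]

lemma mem_stanleySpace_univ {m v : M} (hv : v ∈ stanleySpace (K := K) (n := n) m Finset.univ) :
    ∃ p : S, p • m = v := by
  rcases Submodule.mem_map.1 hv with ⟨p, _, rfl⟩
  exact ⟨p, rfl⟩

section Bridge

variable {r : ℕ} (m : Fin r → M)

/-- `ψ m : (Fin r → S) →ₗ[S] M`, `v ↦ ∑ vᵢ • mᵢ`. -/
noncomputable def psiMap : (Fin r → S) →ₗ[S] M := Fintype.linearCombination S m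

lemma psiMap_apply (v : Fin r → S) : psiMap (K := K) (n := n) m v = ∑ i, v i • m i := rfl

lemma psiMap_single (i : Fin r) (p : S) : psiMap (K := K) (n := n) m (Pi.single i p) = p • m i := by
  rw [psiMap_apply]
  rw [Finset.sum_eq_single i (fun b _ hb => by simp [Pi.single_apply, hb]) (by simp)]
  simp

lemma isInternal_of_bijective (h : Function.Bijective (psiMap (K := K) (n := n) m)) :
    DirectSum.IsInternal (fun i => stanleySpace (K := K) (n := n) (m i) Finset.univ) := by
  classical
  set V : Fin r → Submodule K M := fun i => stanleySpace (K := K) (n := n) (m i) Finset.univ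
  constructor
  · -- injective
    rw [injective_iff_map_eq_zero]
    intro x hx
    -- choose representations
    have hrep : ∀ i, ∃ p : S, p • m i = (x i : M) := fun i => mem_stanleySpace_univ (x i).2
    choose p hp using hrep
    set v : Fin r → S := fun i => if i ∈ DFinsupp.support x then p i else 0 with hv
    have hx0 : psiMap m v = 0 := by
      have : (DirectSum.coeAddMonoidHom V) x = 0 := hx
      rw [← DirectSum.sum_support_of (x := x)] at this
      rw [map_sum] at this
      rw [psiMap_apply]
      simp only [v, ite_smul, zero_smul]
      rw [Finset.sum_ite_mem, Finset.univ_inter]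
      calc ∑ i ∈ DFinsupp.support x, p i • m i
          = ∑ i ∈ DFinsupp.support x, ((x i : M)) := by
            exact Finset.sum_congr rfl fun i _ => hp i
        _ = 0 := by
            rw [← this]
            exact Finset.sum_congr rfl fun i _ => (DirectSum.coeAddMonoidHom_of V i (x i)).symm
    have hv0 : v = 0 := h.injective (by rw [hx0, map_zero])
    refine DFinsupp.ext fun i => ?_
    by_cases hi : i ∈ DFinsupp.support x
    · have h1 : (if i ∈ DFinsupp.support x then p i else 0) = 0 := congr_fun hv0 i
      have : p i = 0 := by rwa [if_pos hi] at h1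
      have : (x i : M) = 0 := by rw [← hp i, this, zero_smul]
      simpa using this
    · simpa using DFinsupp.notMem_support_iff.1 hi
  · -- surjective
    intro u
    obtain ⟨v, hv⟩ := h.surjective u
    refine ⟨∑ i, DirectSum.of (fun i => V i) i ⟨v i • m i, smul_mem_stanleySpace_univ _ _⟩, ?_⟩
    rw [map_sum, ← hv, psiMap_apply]
    exact Finset.sum_congr rfl fun i _ => DirectSum.coeAddMonoidHom_of V i _

lemma bijective_of_isInternal
    (hint : DirectSum.IsInternal (fun i => stanleySpace (K := K) (n := n) (m i) Finset.univ))
    (hfree : ∀ i, ∀ p : S, p • m i = 0 → p = 0) :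
    Function.Bijective (psiMap (K := K) (n := n) m) := by
  classical
  set V : Fin r → Submodule K M := fun i => stanleySpace (K := K) (n := n) (m i) Finset.univ
  constructor
  · rw [injective_iff_map_eq_zero]
    intro v hv
    set x : DirectSum (Fin r) (fun i => V i) :=
      ∑ i, DirectSum.of (fun i => V i) i ⟨v i • m i, smul_mem_stanleySpace_univ _ _⟩ with hxdef
    have hcoe : (DirectSum.coeAddMonoidHom V) x = 0 := by
      rw [hxdef, map_sum]
      rw [show ∑ i, (DirectSum.coeAddMonoidHom V)
          (DirectSum.of (fun i => V i) i ⟨v i • m i, smul_mem_stanleySpace_univ _ _⟩)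
          = ∑ i, v i • m i from
        Finset.sum_congr rfl fun i _ => DirectSum.coeAddMonoidHom_of V i _]
      exact hv
    have hx0 : x = 0 := hint.injective (by rw [hcoe, map_zero])
    funext i
    have hcomp : (x i : M) = v i • m i := by
      rw [hxdef]
      rw [DFinsupp.finset_sum_apply]
      rw [show ∑ j, (DirectSum.of (fun i => V i) j ⟨v j • m j, _⟩) i
          = (⟨v i • m i, smul_mem_stanleySpace_univ _ _⟩ : V i) from ?_]
      · rw [Finset.sum_eq_single i ?_ (by simp)]
        · rw [DirectSum.of_eq_same]
        · intro b _ hb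
          exact DirectSum.of_eq_of_ne _ _ _ hb.symm
    have : v i • m i = 0 := by rw [← hcomp, hx0]; simp
    exact hfree i (v i) this
  · intro u
    obtain ⟨x, hx⟩ := hint.surjective u
    have hrep : ∀ i, ∃ p : S, p • m i = (x i : M) := fun i => mem_stanleySpace_univ (x i).2
    choose p hp using hrep
    refine ⟨fun i => if i ∈ DFinsupp.support x then p i else 0, ?_⟩
    rw [psiMap_apply]
    simp only [ite_smul, zero_smul]
    rw [Finset.sum_ite_mem, Finset.univ_inter]
    calc ∑ i ∈ DFinsupp.support x, p i • m i
        = ∑ i ∈ DFinsupp.support x, ((x i : M)) :=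
          Finset.sum_congr rfl fun i _ => hp i
      _ = (DirectSum.coeAddMonoidHom V)
            (∑ i ∈ DFinsupp.support x, DirectSum.of (fun i => (V i : Type _)) i (x i)) := by
          rw [map_sum]
          exact Finset.sum_congr rfl fun i _ => (DirectSum.coeAddMonoidHom_of V i (x i)).symm
      _ = u := by rw [DirectSum.sum_support_of, hx]

end Bridge





/-- Projection onto the degree-`a` component of the grading. -/
noncomputable def gradeProj (g : MultiGrading K n M) (a : Fin n → ℤ) : M →ₗ[K] M :=
  (g.deg a).subtype ∘ₗ
    (DirectSum.component K (Fin n → ℤ) (fun b => g.deg b) a) ∘ₗ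
      (LinearEquiv.ofBijective (DirectSum.coeLinearMap g.deg) g.isInternal).symm.toLinearMap

lemma gradeProj_of_mem {g : MultiGrading K n M} {a : Fin n → ℤ} {x : M} (hx : x ∈ g.deg a) :
    gradeProj g a x = x := by
  unfold gradeProj
  simp only [LinearMap.coe_comp, Function.comp_apply, LinearEquiv.coe_coe]
  rw [← DirectSum.apply_eq_component]
  rw [g.isInternal.ofBijective_coeLinearMap_of_mem hx]
  rfl

lemma gradeProj_of_mem_ne {g : MultiGrading K n M} {a b : Fin n → ℤ} (hab : b ≠ a) {x : M}
    (hx : x ∈ g.deg b) : gradeProj g a x = 0 := by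
  unfold gradeProj
  simp only [LinearMap.coe_comp, Function.comp_apply, LinearEquiv.coe_coe]
  rw [← DirectSum.apply_eq_component]
  rw [g.isInternal.ofBijective_coeLinearMap_of_mem_ne hab hx]
  simp

lemma constCoeff_smul_mem_span (g : MultiGrading K n M) {r : ℕ} {m : Fin r → M}
    {a : Fin r → (Fin n → ℤ)} (hm : ∀ i, m i ∈ g.deg (a i)) {v : Fin r → S}
    (hrel : ∑ i, v i • m i = 0) (j : Fin r) :
    (constantCoeff (v j)) • m j ∈ Submodule.span S (m '' {i | i ≠ j}) := by
  classical
  set N := Submodule.span S (m '' {i | i ≠ j}) with hN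
  have hexp : ∀ i, v i • m i
      = ∑ c ∈ (v i).support, (coeff c (v i)) • ((monomial c (1:K)) • m i) := by
    intro i
    conv_lhs => rw [(v i).as_sum, Finset.sum_smul]
    refine Finset.sum_congr rfl fun c _ => ?_
    rw [show (monomial c (coeff c (v i))) = (coeff c (v i)) • (monomial c (1:K)) by
      rw [smul_monomial, smul_eq_mul, mul_one]]
    rw [smul_assoc]
  have hproj : ∀ i, gradeProj g (a j) (v i • m i)
      = ∑ c ∈ (v i).support, (coeff c (v i)) • gradeProj g (a j) ((monomial c (1:K)) • m i) := by
    intro i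
    rw [hexp i, map_sum]
    exact Finset.sum_congr rfl fun c _ => map_smul _ _ _
  have hterm : ∀ i, i ≠ j → ∀ c : Fin n →₀ ℕ,
      gradeProj g (a j) ((monomial c (1:K)) • m i) ∈ N := by
    intro i hij c
    have hmem := g.monomial_smul_mem c (a i) (m i) (hm i)
    by_cases hd : (a i + fun t => ((c t : ℕ) : ℤ)) = a j
    · rw [hd] at hmem
      rw [gradeProj_of_mem hmem]
      exact Submodule.smul_mem _ _ (Submodule.subset_span ⟨i, hij, rfl⟩)
    · rw [gradeProj_of_mem_ne hd hmem]
      exact zero_mem _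
  have hjterm : gradeProj g (a j) (v j • m j) = (constantCoeff (v j)) • m j := by
    rw [hproj j]
    rw [Finset.sum_congr rfl (fun c hc => ?_), Finset.sum_ite_eq' (v j).support 0
      (fun _ => (constantCoeff (v j)) • m j)]
    · by_cases h0 : (0 : Fin n →₀ ℕ) ∈ (v j).support
      · rw [if_pos h0]
      · rw [if_neg h0]
        have : constantCoeff (v j) = 0 := by
          rw [constantCoeff_eq]
          exact notMem_support_iff.1 h0
        rw [this, zero_smul]
    · show (coeff c (v j)) • gradeProj g (a j) ((monomial c (1:K)) • m j)
        = if c = 0 then (constantCoeff (v j)) • m j else 0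
      by_cases hc0 : c = 0
      · subst hc0
        rw [if_pos rfl]
        rw [show (monomial (0 : Fin n →₀ ℕ) (1:K)) • m j = m j by
          rw [monomial_zero', map_one, one_smul]]
        rw [gradeProj_of_mem (hm j), constantCoeff_eq]
      · rw [if_neg hc0]
        have hne : (a j + fun t => ((c t : ℕ) : ℤ)) ≠ a j := by
          intro hEq
          apply hc0
          ext t
          have ht := congr_fun hEq t
          simpa using ht
        rw [gradeProj_of_mem_ne hne (g.monomial_smul_mem c (a j) (m j) (hm j)), smul_zero]
  have hsum : gradeProj g (a j) (∑ i, v i • m i) = 0 := by rw [hrel, map_zero]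
  rw [map_sum, Finset.sum_eq_sum_sdiff_singleton_add (Finset.mem_univ j), hjterm] at hsum
  have hrest : ∑ i ∈ Finset.univ \ {j}, gradeProj g (a j) (v i • m i) ∈ N := by
    refine Submodule.sum_mem _ fun i hi => ?_
    have hij : i ≠ j := by
      rcases Finset.mem_sdiff.1 hi with ⟨-, h2⟩
      simpa using h2
    rw [hproj i]
    refine Submodule.sum_mem _ fun c _ => ?_
    rw [← algebraMap_smul (MvPolynomial (Fin n) K) (coeff c (v i))]
    exact Submodule.smul_mem _ _ (hterm i hij c)
  have : (constantCoeff (v j)) • m j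
      = - ∑ i ∈ Finset.univ \ {j}, gradeProj g (a j) (v i • m i) := by
    rw [eq_neg_iff_add_eq_zero, add_comm]
    exact hsum
  rw [this]
  exact neg_mem hrest





lemma exists_homog_fin [Module.Finite (MvPolynomial (Fin n) K) M] (g : MultiGrading K n M) :
    ∃ (r : ℕ) (m : Fin r → M), (∀ i, ∃ a, m i ∈ g.deg a) ∧
      Submodule.span (MvPolynomial (Fin n) K) (Set.range m) = ⊤ := by
  classical
  obtain ⟨k, s, hs⟩ := Module.Finite.exists_fin (R := MvPolynomial (Fin n) K) (M := M)
  set E := LinearEquiv.ofBijective (DirectSum.coeLinearMap g.deg) g.isInternal with hE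
  set T : Finset M := Finset.univ.biUnion
    (fun j => (DFinsupp.support (E.symm (s j))).image (fun a => ((E.symm (s j)) a : M))) with hT
  have hT1 : ∀ x ∈ T, ∃ a, x ∈ g.deg a := by
    intro x hx
    rcases Finset.mem_biUnion.1 hx with ⟨j, -, hj⟩
    rcases Finset.mem_image.1 hj with ⟨a, -, rfl⟩
    exact ⟨a, ((E.symm (s j)) a).2⟩
  have hT2 : Submodule.span (MvPolynomial (Fin n) K) (↑T : Set M) = ⊤ := by
    rw [eq_top_iff, ← hs, Submodule.span_le]
    rintro - ⟨j, rfl⟩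
    have hsj : s j = ∑ a ∈ DFinsupp.support (E.symm (s j)), ((E.symm (s j)) a : M) := by
      have h1 : s j = DirectSum.coeLinearMap g.deg (E.symm (s j)) := by
        conv_lhs => rw [show s j = E (E.symm (s j)) from (E.apply_symm_apply _).symm]
        rfl
      conv_lhs => rw [h1, ← DirectSum.sum_support_of (x := E.symm (s j))]
      rw [map_sum]
      exact Finset.sum_congr rfl fun a _ =>
        DirectSum.coeLinearMap_of g.deg a _
    rw [hsj]
    refine Submodule.sum_mem _ fun a ha => Submodule.subset_span ?_
    exact Finset.mem_coe.2 (Finset.mem_biUnion.2 ⟨j, Finset.mem_univ j,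
      Finset.mem_image.2 ⟨a, ha, rfl⟩⟩)
  refine ⟨T.card, fun i => ((T.equivFin.symm i : T) : M), ?_, ?_⟩
  · intro i
    exact hT1 _ (T.equivFin.symm i).2
  · have hrange : Set.range (fun i => ((T.equivFin.symm i : T) : M)) = (↑T : Set M) := by
      ext x
      constructor
      · rintro ⟨i, rfl⟩
        exact (T.equivFin.symm i).2
      · intro hx
        exact ⟨T.equivFin ⟨x, hx⟩, by simp⟩
    rw [hrange, hT2]

section Part5

variable [Nontrivial M]

lemma exists_bijective_psi_of_free [Module.Finite (MvPolynomial (Fin n) K) M]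
    [Module.Free (MvPolynomial (Fin n) K) M] (g : MultiGrading K n M) :
    ∃ (r : ℕ) (m : Fin r → M), 0 < r ∧ (∀ i, ∃ a, m i ∈ g.deg a) ∧
      Function.Bijective (psiMap (K := K) (n := n) m) := by
  classical
  set P : ℕ → Prop := fun r => ∃ m : Fin r → M, (∀ i, ∃ a, m i ∈ g.deg a) ∧
    Submodule.span (MvPolynomial (Fin n) K) (Set.range m) = ⊤ with hPdef
  have hP : ∃ r, P r := by
    obtain ⟨r, m, h1, h2⟩ := exists_homog_fin g
    exact ⟨r, m, h1, h2⟩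
  set r₀ := Nat.find hP with hr₀def
  obtain ⟨m, hom, hspan⟩ : P r₀ := Nat.find_spec hP
  have hr₀ : 0 < r₀ := by
    rcases Nat.eq_zero_or_pos r₀ with h0 | h
    · exfalso
      haveI : IsEmpty (Fin r₀) := by rw [h0]; infer_instance
      rw [Set.range_eq_empty m, Submodule.span_empty] at hspan
      obtain ⟨x, y, hxy⟩ := exists_pair_ne M
      have hx : x ∈ (⊥ : Submodule (MvPolynomial (Fin n) K) M) := by rw [hspan]; trivial
      have hy : y ∈ (⊥ : Submodule (MvPolynomial (Fin n) K) M) := by rw [hspan]; trivial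
      rw [Submodule.mem_bot] at hx hy
      exact hxy (hx.trans hy.symm)
    · exact h
  set ψ := psiMap (K := K) (n := n) m with hψ
  have hsurj : Function.Surjective ψ := by
    rw [← LinearMap.range_eq_top, hψ]
    show LinearMap.range (Fintype.linearCombination (MvPolynomial (Fin n) K)
      m) = ⊤
    rw [Fintype.range_linearCombination, hspan]
  -- minimality: every relation has zero constant coefficients
  have hnoconst : ∀ v : Fin r₀ → MvPolynomial (Fin n) K, ψ v = 0 →
      ∀ j, constantCoeff (v j) = 0 := by
    intro v hv j
    by_contra hc
    choose a ha using hom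
    have hrel : ∑ i, v i • m i = 0 := by rw [← psiMap_apply (K := K) (n := n) m v]; exact hv
    have hmem := constCoeff_smul_mem_span g ha hrel j
    have hmj : m j ∈ Submodule.span (MvPolynomial (Fin n) K) (m '' {i | i ≠ j}) := by
      have h2 : ((constantCoeff (v j))⁻¹ : K) • ((constantCoeff (v j)) • m j) ∈
          Submodule.span (MvPolynomial (Fin n) K) (m '' {i | i ≠ j}) := by
        rw [← algebraMap_smul (MvPolynomial (Fin n) K) ((constantCoeff (v j))⁻¹ : K)]
        exact Submodule.smul_mem _ _ hmem
      rwa [smul_smul, inv_mul_cancel₀ hc, one_smul] at h2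
    have htop : Submodule.span (MvPolynomial (Fin n) K) (m '' {i | i ≠ j}) = ⊤ := by
      rw [eq_top_iff, ← hspan, Submodule.span_le]
      rintro - ⟨i, rfl⟩
      by_cases hij : i = j
      · subst hij; exact hmj
      · exact Submodule.subset_span ⟨i, hij, rfl⟩
    obtain ⟨k, hk⟩ := Nat.exists_eq_succ_of_ne_zero hr₀.ne'
    have hcard : Fintype.card {i : Fin r₀ // i ≠ j} = k := by
      rw [Fintype.card_subtype_compl, Fintype.card_subtype_eq, Fintype.card_fin, hk,
        Nat.succ_sub_one]
    set e := Fintype.equivFinOfCardEq hcard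
    set m' : Fin k → M := fun t => m (e.symm t).1 with hm'
    have hrange : Set.range m' = m '' {i | i ≠ j} := by
      ext x
      constructor
      · rintro ⟨t, rfl⟩
        exact ⟨(e.symm t).1, (e.symm t).2, rfl⟩
      · rintro ⟨i, hi, rfl⟩
        exact ⟨e ⟨i, hi⟩, by simp [hm']⟩
    have hPk : P k := ⟨m', fun t => ⟨a _, ha _⟩, by rw [hrange, htop]⟩
    have hlt : k < Nat.find hP := by rw [← hr₀def, hk]; exact k.lt_succ_self
    exact Nat.find_min hP hlt hPk
  -- Nakayama
  obtain ⟨σ, hσ⟩ := Module.projective_lifting_property ψ LinearMap.id hsurj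
  set π : (Fin r₀ → MvPolynomial (Fin n) K) →ₗ[MvPolynomial (Fin n) K]
      (Fin r₀ → MvPolynomial (Fin n) K) := LinearMap.id - σ ∘ₗ ψ with hπ
  have hπker : ∀ f, ψ (π f) = 0 := by
    intro f
    have : ψ (σ (ψ f)) = ψ f := by
      have := congr_arg (fun (h : M →ₗ[MvPolynomial (Fin n) K] M) => h (ψ f)) hσ
      simpa using this
    simp [hπ, this]
  have hπfix : ∀ f ∈ LinearMap.ker ψ, π f = f := by
    intro f hf
    rw [LinearMap.mem_ker] at hf
    simp [hπ, hf]
  have hker_eq : LinearMap.ker ψ = LinearMap.range π := by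
    apply le_antisymm
    · intro f hf
      exact ⟨f, hπfix f hf⟩
    · rintro - ⟨f, rfl⟩
      exact LinearMap.mem_ker.2 (hπker f)
  set I : Ideal (MvPolynomial (Fin n) K) :=
    RingHom.ker (constantCoeff : MvPolynomial (Fin n) K →+* K) with hI
  have hkerI : LinearMap.ker ψ ≤ I • (⊤ : Submodule (MvPolynomial (Fin n) K)
      (Fin r₀ → MvPolynomial (Fin n) K)) := by
    intro f hf
    have hcc : ∀ i, constantCoeff (f i) = 0 := hnoconst f (LinearMap.mem_ker.1 hf)
    rw [pi_eq_sum_univ f]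
    refine Submodule.sum_mem _ fun i _ => ?_
    exact Submodule.smul_mem_smul (RingHom.mem_ker.2 (hcc i)) trivial
  have hKK : LinearMap.ker ψ ≤ I • (LinearMap.ker ψ) := by
    intro f hf
    have h2 : f ∈ Submodule.map π (I • ⊤) :=
      ⟨f, hkerI hf, hπfix f hf⟩
    rw [Submodule.map_smul'', Submodule.map_top, ← hker_eq] at h2
    exact h2
  have hfg : (LinearMap.ker ψ).FG := by
    rw [hker_eq, ← Submodule.map_top]
    exact Submodule.FG.map _ (Module.finite_def.1 inferInstance)
  obtain ⟨c, hc1, hc0⟩ :=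
    Submodule.exists_sub_one_mem_and_smul_eq_zero_of_fg_of_le_smul I _ hfg hKK
  have hcne : c ≠ 0 := by
    intro h0
    have : constantCoeff c = 1 := by
      have := RingHom.mem_ker.1 (hI ▸ hc1)
      have h2 : constantCoeff c - 1 = 0 := by simpa using this
      exact sub_eq_zero.1 h2
    rw [h0, map_zero] at this
    exact zero_ne_one this
  have hinj : LinearMap.ker ψ = ⊥ := by
    rw [eq_bot_iff]
    intro f hf
    have := hc0 f hf
    have hz : ∀ i, f i = 0 := by
      intro i
      have hci : c * f i = 0 := congr_fun this i
      rcases mul_eq_zero.1 hci with h | h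
      · exact absurd h hcne
      · exact h
    exact (Submodule.mem_bot _).2 (funext hz)
  exact ⟨r₀, m, hr₀, hom, LinearMap.ker_eq_bot.1 hinj, hsurj⟩

end Part5
/-- A Stanley decomposition of a multigraded module `M`: a finite family of
homogeneous elements `mᵢ` and sets of variables `Zᵢ` such that each `mᵢ·K[Zᵢ]` is a
free `K[Zᵢ]`-module and `M = ⊕ᵢ mᵢ·K[Zᵢ]` as a `K`-vector space. -/
structure StanleyDecomposition (g : MultiGrading K n M) where
  r : ℕ
  elt : Fin r → M
  Z : Fin r → Finset (Fin n)
  homogeneous : ∀ i, ∃ a, elt i ∈ g.deg a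
  free : ∀ i, ∀ p ∈ MvPolynomial.supported K (↑(Z i) : Set (Fin n)), p • elt i = 0 → p = 0
  isInternal : DirectSum.IsInternal fun i => stanleySpace (K := K) (elt i) (Z i)

/-- The Stanley depth of a Stanley decomposition: the minimum of the `|Zᵢ|`. -/
noncomputable def StanleyDecomposition.sdepth {g : MultiGrading K n M}
    (D : StanleyDecomposition g) : ℕ∞ :=
  ⨅ i, ((D.Z i).card : ℕ∞)

/-- The Stanley depth of a multigraded module: the supremum of the Stanley depths
of its Stanley decompositions. -/
noncomputable def stanleyDepth (g : MultiGrading K n M) : ℕ∞ :=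
  ⨆ D : StanleyDecomposition g, D.sdepth

lemma StanleyDecomposition.r_pos [Nontrivial M] {g : MultiGrading K n M}
    (D : StanleyDecomposition g) : 0 < D.r := by
  by_contra h
  push_neg at h
  have h0 : D.r = 0 := Nat.le_zero.1 h
  haveI : IsEmpty (Fin D.r) := by rw [h0]; infer_instance
  have htop := D.isInternal.submodule_iSup_eq_top
  rw [iSup_of_empty] at htop
  obtain ⟨x, y, hxy⟩ := exists_pair_ne M
  have hx : x ∈ (⊥ : Submodule K M) := by rw [htop]; trivial
  have hy : y ∈ (⊥ : Submodule K M) := by rw [htop]; trivial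
  rw [Submodule.mem_bot] at hx hy
  exact hxy (hx.trans hy.symm)

lemma StanleyDecomposition.sdepth_le_n [Nontrivial M] {g : MultiGrading K n M}
    (D : StanleyDecomposition g) : D.sdepth ≤ (n : ℕ∞) := by
  refine iInf_le_of_le ⟨0, D.r_pos⟩ ?_
  refine Nat.cast_le.2 ?_
  exact (Finset.card_le_univ _).trans_eq (by simp)

/-- Let `M` be a finitely generated `ℤⁿ`-graded module over
`S = K[x₁,…,xₙ]`. Then `sdepth M = n` if and only if `M` is a free `S`-module. -/
theorem sdepth_eq_n_iff_free [Nontrivial M]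
    [Module.Finite (MvPolynomial (Fin n) K) M] (g : MultiGrading K n M) :
    stanleyDepth g = (n : ℕ∞) ↔ Module.Free (MvPolynomial (Fin n) K) M := by
  constructor
  · intro h
    rcases Nat.eq_zero_or_pos n with hn | hn
    · subst hn
      have hfield : IsField (MvPolynomial (Fin 0) K) :=
        MulEquiv.isField (Field.toIsField K)
          (MvPolynomial.isEmptyAlgEquiv K (Fin 0)).toRingEquiv.toMulEquiv
      letI := hfield.toField
      exact Module.Free.of_divisionRing (MvPolynomial (Fin 0) K) M
    · obtain ⟨k, hk⟩ := Nat.exists_eq_succ_of_ne_zero hn.ne'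
      have hD : ∃ D : StanleyDecomposition g, (n : ℕ∞) ≤ D.sdepth := by
        by_contra hA
        push_neg at hA
        have hle : ∀ D : StanleyDecomposition g, D.sdepth ≤ (k : ℕ∞) := by
          intro D
          have h1 := hA D
          have heq : ((k : ℕ∞) + 1) = (n : ℕ∞) := by
            rw [hk]
            exact_mod_cast (Nat.cast_succ k).symm
          have h1' : D.sdepth < ((k : ℕ∞) + 1) := h1.trans_le (le_of_eq heq.symm)
          exact (ENat.lt_add_one_iff (ENat.coe_ne_top k)).1 h1'
        have h2 : stanleyDepth g ≤ (k : ℕ∞) := iSup_le hle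
        rw [h, hk] at h2
        have := Nat.cast_le.1 h2
        omega
      obtain ⟨D, hD⟩ := hD
      have hZ : ∀ i, D.Z i = Finset.univ := by
        intro i
        apply Finset.eq_univ_of_card
        have h1 : (n : ℕ∞) ≤ ((D.Z i).card : ℕ∞) := le_trans hD (iInf_le _ i)
        have h2 : n ≤ (D.Z i).card := Nat.cast_le.1 h1
        have h3 : (D.Z i).card ≤ n := (Finset.card_le_univ _).trans_eq (by simp)
        rw [Fintype.card_fin]
        omega
      have hint : DirectSum.IsInternal
          (fun i => stanleySpace (K := K) (n := n) (D.elt i) Finset.univ) := by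
        have h4 := D.isInternal
        rwa [show (fun i => stanleySpace (K := K) (D.elt i) (D.Z i))
            = fun i => stanleySpace (K := K) (n := n) (D.elt i) Finset.univ from
          funext fun i => by rw [hZ i]] at h4
      have hfree : ∀ i, ∀ p : MvPolynomial (Fin n) K, p • D.elt i = 0 → p = 0 := by
        intro i p hp
        refine D.free i p ?_ hp
        rw [hZ i]
        simp [Finset.coe_univ, MvPolynomial.supported_univ]
      have hbij := bijective_of_isInternal D.elt hint hfree
      exact Module.Free.of_equiv (LinearEquiv.ofBijective (psiMap (K := K) (n := n) D.elt) hbij)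
  · intro hfreeM
    obtain ⟨r, m, hr, hom, hbij⟩ := exists_bijective_psi_of_free g
    have hint := isInternal_of_bijective m hbij
    set D : StanleyDecomposition g :=
      { r := r, elt := m, Z := fun _ => Finset.univ,
        homogeneous := hom,
        free := fun i p _ hz => by
          have h1 : psiMap (K := K) (n := n) m (Pi.single i p) = 0 := by
            rw [psiMap_single]; exact hz
          have h0 : Pi.single i p = (0 : Fin r → MvPolynomial (Fin n) K) :=
            hbij.injective (by rw [h1, map_zero])
          have := congr_fun h0 i
          simpa using this,
        isInternal := hint } with hDdef
    have hsdepth : D.sdepth = (n : ℕ∞) := by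
      haveI : Nonempty (Fin r) := ⟨⟨0, hr⟩⟩
      unfold StanleyDecomposition.sdepth
      rw [show (fun i : Fin D.r => ((D.Z i).card : ℕ∞)) = fun _ => (n : ℕ∞) from
        funext fun i => by
          show ((Finset.univ : Finset (Fin n)).card : ℕ∞) = n; simp]
      exact iInf_const
    refine le_antisymm (iSup_le fun D' => D'.sdepth_le_n) ?_
    exact le_iSup_of_le D (le_of_eq hsdepth.symm)
end

section
/- Let $M$ be a finitely generated $\mathbb{Z}^n$-graded module over $S=K[x_1,\ldots,x_n]$ such that $\dim_K(M_a)\le 1$ for every multidegree $a\in\mathbb{Z}^n$. If $\operatorname{depth}(M)=0$, then $\operatorname{sdepth}(M)=0$. -/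
open MvPolynomial

variable {K : Type*} [Field K] {n : ℕ} {M : Type*} [AddCommGroup M]
  [Module K M] [Module (MvPolynomial (Fin n) K) M]
  [IsScalarTower K (MvPolynomial (Fin n) K) M]

private lemma zero_of_mem_disj {ι N : Type*} [AddCommGroup N] [Module K N]
    {p : ι → Submodule K N} (hp : iSupIndep p) {a : ι} {v : N}
    (h1 : v ∈ p a) (h2 : v ∈ ⨆ b, ⨆ _ : b ≠ a, p b) : v = 0 :=
  (Submodule.disjoint_def.mp (hp a)) v h1 h2


/-- Let `M` be a finitely generated `ℤⁿ`-graded module over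
`S = K[x₁,…,xₙ]` with `dim_K M_a ≤ 1` for every multidegree `a`. If `depth M = 0`
(i.e. `𝔪 = (x₁,…,xₙ)` is an associated prime of `M`), then `sdepth M = 0`. -/
theorem sdepth_eq_zero_of_depth_eq_zero
    [Module.Finite (MvPolynomial (Fin n) K) M] (g : MultiGrading K n M)
    (hdim : ∀ a : Fin n → ℤ, Module.rank K (g.deg a) ≤ 1)
    (h : IsAssociatedPrime (Ideal.span (Set.range (X : Fin n → MvPolynomial (Fin n) K))) M) :
    stanleyDepth g = 0 := by
  classical
  obtain ⟨hP, x, hx⟩ := isAssociatedPrime_iff.mp h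
  -- x ≠ 0 and X j • x = 0
  have hXx : ∀ j, (X j : MvPolynomial (Fin n) K) • x = 0 := by
    intro j
    have hj : (X j : MvPolynomial (Fin n) K) ∈
        (Ideal.span (Set.range (X : Fin n → MvPolynomial (Fin n) K))) :=
      Ideal.subset_span ⟨j, rfl⟩
    rw [hx] at hj
    exact (Submodule.mem_bot _).mp (Submodule.mem_colon_singleton.mp hj)
  have hx0 : x ≠ 0 := by
    rintro rfl
    apply hP.ne_top
    rw [hx, Ideal.eq_top_iff_one, Submodule.mem_colon_singleton]
    simp
  -- decompose x into graded components
  obtain ⟨f, hf, hfs⟩ := (Submodule.mem_iSup_iff_exists_finsupp g.deg x).mp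
    (g.isInternal.submodule_iSup_eq_top ▸ Submodule.mem_top)
  have hind := g.isInternal.submodule_iSupIndep
  obtain ⟨a, hafne⟩ : ∃ a, f a ≠ 0 := by
    by_contra hc
    push_neg at hc
    exact hx0 (by rw [← hfs, Finsupp.sum]; exact Finset.sum_eq_zero fun b _ => hc b)
  set y : M := f a with hy_def
  have hya : y ∈ g.deg a := hf a
  have haS : a ∈ f.support := Finsupp.mem_support_iff.mpr hafne
  -- y is a homogeneous socle element
  have hXy : ∀ j, (X j : MvPolynomial (Fin n) K) • y = 0 := by
    intro j
    have hmono : ∀ b, (X j : MvPolynomial (Fin n) K) • f b ∈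
        g.deg (b + fun i => ((Finsupp.single j 1 : Fin n →₀ ℕ) i : ℤ)) := by
      intro b
      have := g.monomial_smul_mem (Finsupp.single j 1) b (f b) (hf b)
      rwa [show (monomial (Finsupp.single j 1) (1 : K)) = X j from rfl] at this
    have hsum : (X j : MvPolynomial (Fin n) K) • y
        + ∑ b ∈ f.support.erase a, (X j : MvPolynomial (Fin n) K) • f b = 0 := by
      have h1 := Finset.add_sum_erase f.support
        (fun b => (X j : MvPolynomial (Fin n) K) • f b) haS
      have h2 : ∑ b ∈ f.support, (X j : MvPolynomial (Fin n) K) • f b = 0 := by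
        have hfs' : ∑ b ∈ f.support, f b = x := hfs
        rw [← Finset.smul_sum, hfs', hXx j]
      rw [hy_def]
      rw [h2] at h1
      exact h1
    have hmem2 : (X j : MvPolynomial (Fin n) K) • y ∈
        ⨆ b, ⨆ _ : b ≠ (a + fun i => ((Finsupp.single j 1 : Fin n →₀ ℕ) i : ℤ)), g.deg b := by
      rw [eq_neg_of_add_eq_zero_left hsum]
      refine Submodule.neg_mem _ (Submodule.sum_mem _ fun b hb => ?_)
      have hbne : b ≠ a := Finset.ne_of_mem_erase hb
      refine Submodule.mem_iSup_of_mem _ (Submodule.mem_iSup_of_mem ?_ (hmono b))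
      intro hcon
      exact hbne (by funext i; have := congrFun hcon i; simpa using this)
    exact zero_of_mem_disj hind (hmono a) hmem2
  -- now show every Stanley decomposition has sdepth 0
  have key : ∀ D : StanleyDecomposition g, D.sdepth = 0 := by
    intro D
    -- decompose y over the Stanley spaces
    obtain ⟨f2, hf2, hs2⟩ := (Submodule.mem_iSup_iff_exists_finsupp
      (fun i => stanleySpace (K := K) (D.elt i) (D.Z i)) y).mp
      (D.isInternal.submodule_iSup_eq_top ▸ Submodule.mem_top)
    choose p hpsup hpeq using fun i => Submodule.mem_map.mp (hf2 i)
    choose ai hai using D.homogeneous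
    -- there exists a nonzero monomial piece of degree a
    have claim : ∃ i, ∃ c : Fin n →₀ ℕ, (↑c.support : Set (Fin n)) ⊆ ↑(D.Z i) ∧
        (monomial c (1 : K)) • D.elt i ∈ g.deg a ∧ (monomial c (1 : K)) • D.elt i ≠ 0 := by
      by_contra hc
      push_neg at hc
      apply hafne
      refine zero_of_mem_disj hind hya ?_
      rw [← hs2, Finsupp.sum]
      refine Submodule.sum_mem _ fun i _ => ?_
      rw [← hpeq i]
      have : ((LinearMap.toSpanSingleton (MvPolynomial (Fin n) K) M (D.elt i)).restrictScalars K)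
          (p i) = (p i) • D.elt i := rfl
      rw [this, (p i).as_sum, Finset.sum_smul]
      refine Submodule.sum_mem _ fun c hcsup => ?_
      have hsub : (↑c.support : Set (Fin n)) ⊆ ↑(D.Z i) := by
        intro t ht
        have : t ∈ (p i).vars := (mem_vars t).mpr ⟨c, hcsup, ht⟩
        exact (mem_supported.mp (hpsup i)) this
      have hterm : (monomial c (coeff c (p i))) • D.elt i
          = (coeff c (p i)) • ((monomial c (1 : K)) • D.elt i) := by
        rw [← smul_assoc, MvPolynomial.smul_monomial, smul_eq_mul, mul_one]
      rw [hterm]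
      by_cases hdeg : (ai i + fun t => (c t : ℤ)) = a
      · rw [hc i c hsub (hdeg ▸ g.monomial_smul_mem c (ai i) (D.elt i) (hai i)), smul_zero]
        exact Submodule.zero_mem _
      · refine Submodule.smul_mem _ _ ?_
        exact Submodule.mem_iSup_of_mem _ (Submodule.mem_iSup_of_mem hdeg
          (g.monomial_smul_mem c (ai i) (D.elt i) (hai i)))
    obtain ⟨i, c, hsub, hvdeg, hvne⟩ := claim
    -- Z i must be empty
    have hZ : D.Z i = ∅ := by
      by_contra hZne
      obtain ⟨j, hj⟩ := Finset.nonempty_iff_ne_empty.mpr hZne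
      set v : M := (monomial c (1 : K)) • D.elt i with hv_def
      -- v is a nonzero multiple of y, hence killed by X j
      obtain ⟨v₀, hv₀⟩ := rank_le_one_iff.mp (hdim a)
      obtain ⟨r, hr⟩ := hv₀ ⟨y, hya⟩
      obtain ⟨s, hs⟩ := hv₀ ⟨v, hvdeg⟩
      have hr0 : r ≠ 0 := by
        rintro rfl
        apply hafne
        have := congrArg (Subtype.val) hr
        simpa using this.symm
      have hvy : v = (s * r⁻¹) • y := by
        have h1 : r • (v₀ : M) = y := congrArg Subtype.val hr
        have h2 : s • (v₀ : M) = v := congrArg Subtype.val hs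
        rw [← h2, ← h1, smul_smul, mul_assoc, inv_mul_cancel₀ hr0, mul_one]
      have hXv : (X j : MvPolynomial (Fin n) K) • v = 0 := by
        rw [hvy, smul_comm, hXy j, smul_zero]
      have hXv' : (X j * monomial c (1 : K)) • D.elt i = 0 := by
        rw [mul_smul, ← hv_def, hXv]
      have hmem : (X j * monomial c (1 : K)) ∈
          MvPolynomial.supported K (↑(D.Z i) : Set (Fin n)) := by
        apply mul_mem
        · exact X_mem_supported.mpr hj
        · rw [mem_supported, vars_monomial one_ne_zero]
          exact hsub
      have := D.free i _ hmem hXv'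
      rw [show (X j : MvPolynomial (Fin n) K) = monomial (Finsupp.single j 1) 1 from rfl,
        monomial_mul, one_mul, monomial_eq_zero] at this
      exact one_ne_zero this
    have : D.sdepth ≤ 0 := by
      refine le_trans (iInf_le _ i) ?_
      simp [hZ]
    exact le_antisymm this zero_le
  refine le_antisymm (iSup_le fun D => (key D).le) zero_le
end

section
/- Let $S=K[x_1,x_2]$ and let $M=(Se_1\oplus Se_2)/(x_1z,\,x_2z)$ where $z=x_1e_2-x_2e_1$, graded by $\deg(e_1)=(1,0)$ and $\deg(e_2)=(0,1)$. Then $\operatorname{depth}(M)=0$ and $\operatorname{sdepth}(M)=1$. (In particular, the hypothesis $\dim_K(M_a)\le 1$ cannot be omitted from the statement that $\operatorname{depth}(M)=0$ implies $\operatorname{sdepth}(M)=0$.) -/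
open MvPolynomial

variable {K : Type*} [Field K] {n : ℕ} {M : Type*} [AddCommGroup M]
  [Module K M] [Module (MvPolynomial (Fin n) K) M]
  [IsScalarTower K (MvPolynomial (Fin n) K) M]

/-- The element `z = x₁e₂ - x₂e₁` of the free module `Se₁ ⊕ Se₂` over `S = F[x₁,x₂]`. -/
noncomputable def popescuZ (F : Type*) [Field F] :
    MvPolynomial (Fin 2) F × MvPolynomial (Fin 2) F :=
  (-(X 1), X 0)

/-- The submodule of relations `(x₁z, x₂z)` of `Se₁ ⊕ Se₂`. -/
noncomputable def popescuRels (F : Type*) [Field F] :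
    Submodule (MvPolynomial (Fin 2) F) (MvPolynomial (Fin 2) F × MvPolynomial (Fin 2) F) :=
  Submodule.span _ {(X 0 : MvPolynomial (Fin 2) F) • popescuZ F,
    (X 1 : MvPolynomial (Fin 2) F) • popescuZ F}

/-- Popescu's example: `M = (Se₁ ⊕ Se₂)/(x₁z, x₂z)` with `z = x₁e₂ - x₂e₁`. -/
abbrev PopescuModule (F : Type*) [Field F] : Type _ :=
  (MvPolynomial (Fin 2) F × MvPolynomial (Fin 2) F) ⧸ popescuRels F

/-! ### Auxiliary material -/

section Generic

lemma coeAddMonoidHom_eq_sum' {R M ι : Type*} [Semiring R] [AddCommMonoid M] [Module R M]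
    [Fintype ι] [DecidableEq ι] (A : ι → Submodule R M) (w : DirectSum ι fun i => A i) :
    DirectSum.coeAddMonoidHom A w = ∑ i, (w i : M) := by
  conv_lhs => rw [← DirectSum.sum_univ_of w]
  rw [map_sum]
  simp

lemma lsum_eq_sum' {R M ι : Type*} [Semiring R] [AddCommMonoid M] [Module R M]
    [Fintype ι] [DecidableEq ι] (A : ι → Submodule R M) (w : Π₀ i, A i) :
    DFinsupp.lsum ℕ (fun i => (A i).subtype) w = ∑ i, (w i : M) := by
  classical
  rw [DFinsupp.lsum_apply_apply, DFinsupp.sumAddHom_apply]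
  refine Finset.sum_subset (Finset.subset_univ _) (fun i _ hi => ?_)
  rw [DFinsupp.notMem_support_iff.mp hi]
  simp

lemma sum_of_apply' {ι : Type*} [DecidableEq ι] [Fintype ι] {β : ι → Type*}
    [∀ i, AddCommMonoid (β i)] (x : ∀ i, β i) (j : ι) :
    (∑ i, DirectSum.of β i (x i)) j = x j := by
  rw [DFinsupp.finset_sum_apply]
  rw [Finset.sum_eq_single j]
  · exact DirectSum.of_eq_same j (x j)
  · intro i _ hij; exact DirectSum.of_eq_of_ne _ _ _ hij.symm
  · intro h; exact absurd (Finset.mem_univ j) h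

theorem aeval_of_supported {σ K : Type*} [CommSemiring K] {s : Set σ}
    {f : σ → MvPolynomial σ K}
    (hf : ∀ i ∈ s, f i = X i) {p : MvPolynomial σ K}
    (hp : p ∈ MvPolynomial.supported K s) : aeval f p = p := by
  rw [supported_eq_range_rename] at hp
  obtain ⟨q, rfl⟩ := hp
  show aeval f (rename Subtype.val q) = rename Subtype.val q
  rw [aeval_rename]
  have h2 : (f ∘ (Subtype.val : s → σ)) = fun i : s => X i.val :=
    funext fun i => hf i i.2
  rw [h2]
  rw [← aeval_X_left_apply (rename Subtype.val q), aeval_rename]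
  rfl

theorem aeval_of_supported_zero {σ K : Type*} [CommSemiring K] {s : Set σ}
    {f : σ → MvPolynomial σ K}
    (hf : ∀ i ∈ s, f i = 0) {p : MvPolynomial σ K}
    (hp : p ∈ MvPolynomial.supported K s) :
    aeval f p = C (constantCoeff p) := by
  rw [supported_eq_range_rename] at hp
  obtain ⟨q, rfl⟩ := hp
  show aeval f (rename Subtype.val q) = C (constantCoeff (rename Subtype.val q))
  rw [aeval_rename]
  have h2 : (f ∘ (Subtype.val : s → σ)) = fun i : s => (0 : MvPolynomial σ K) :=
    funext fun i => hf i i.2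
  rw [h2, constantCoeff_rename]
  rw [show (fun _ : s => (0 : MvPolynomial σ K)) = (0 : s → MvPolynomial σ K) from rfl,
    aeval_zero, algebraMap_eq]

lemma mem_stanleySpace_iff {K : Type*} [Field K] {n : ℕ} {M : Type*} [AddCommGroup M]
    [Module K M] [Module (MvPolynomial (Fin n) K) M]
    [IsScalarTower K (MvPolynomial (Fin n) K) M] {m : M} {Z : Finset (Fin n)} {w : M} :
    w ∈ stanleySpace (K := K) m Z
      ↔ ∃ p ∈ MvPolynomial.supported K (↑Z : Set (Fin n)), p • m = w := by
  simp only [stanleySpace, Submodule.mem_map, Subalgebra.mem_toSubmodule,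
    LinearMap.coe_restrictScalars, LinearMap.toSpanSingleton_apply]

end Generic

section Popescu

variable {F : Type*} [Field F]

/-- killing `X 0` -/
noncomputable def sigmaMap (F : Type*) [Field F] :
    MvPolynomial (Fin 2) F →ₐ[F] MvPolynomial (Fin 2) F :=
  aeval ![0, X 1]

/-- killing `X 1` -/
noncomputable def tauMap (F : Type*) [Field F] :
    MvPolynomial (Fin 2) F →ₐ[F] MvPolynomial (Fin 2) F :=
  aeval ![X 0, 0]

@[simp] lemma sigmaMap_X0 : sigmaMap F (X 0) = 0 := by simp [sigmaMap]
@[simp] lemma sigmaMap_X1 : sigmaMap F (X 1) = X 1 := by simp [sigmaMap]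
@[simp] lemma tauMap_X0 : tauMap F (X 0) = X 0 := by simp [tauMap]
@[simp] lemma tauMap_X1 : tauMap F (X 1) = 0 := by simp [tauMap]

lemma sigmaMap_of_supported {p : MvPolynomial (Fin 2) F}
    (hp : p ∈ MvPolynomial.supported F ({1} : Set (Fin 2))) : sigmaMap F p = p :=
  aeval_of_supported (by rintro i rfl; simp [sigmaMap]) hp

lemma tauMap_of_supported {p : MvPolynomial (Fin 2) F}
    (hp : p ∈ MvPolynomial.supported F ({0} : Set (Fin 2))) : tauMap F p = p :=
  aeval_of_supported (by rintro i rfl; simp [tauMap]) hp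

lemma sigmaMap_of_supported0 {p : MvPolynomial (Fin 2) F}
    (hp : p ∈ MvPolynomial.supported F ({0} : Set (Fin 2))) :
    sigmaMap F p = C (constantCoeff p) :=
  aeval_of_supported_zero (by rintro i rfl; simp [sigmaMap]) hp

theorem key_indep {p₁ p₂ p₃ p₄ p₅ h : MvPolynomial (Fin 2) F}
    (s₁ : p₁ ∈ MvPolynomial.supported F ({0} : Set (Fin 2)))
    (s₂ : p₂ ∈ MvPolynomial.supported F ({1} : Set (Fin 2)))
    (s₃ : p₃ ∈ MvPolynomial.supported F ({0} : Set (Fin 2)))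
    (s₄ : p₄ ∈ MvPolynomial.supported F ({1} : Set (Fin 2)))
    (hh : constantCoeff h = 0)
    (e₁ : p₁ + p₄ * X 1 + p₅ * (X 0 * X 1 ^ 2) = -(h * X 1))
    (e₂ : p₂ + p₃ * X 0 = h * X 0) :
    p₁ = 0 ∧ p₂ = 0 ∧ p₃ = 0 ∧ p₄ = 0 ∧ p₅ = 0 := by
  have X0ne : (X 0 : MvPolynomial (Fin 2) F) ≠ 0 := X_ne_zero 0
  have X1ne : (X 1 : MvPolynomial (Fin 2) F) ≠ 0 := X_ne_zero 1
  have hp2 : p₂ = 0 := by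
    have := congrArg (sigmaMap F) e₂
    simp only [map_add, map_mul, sigmaMap_X0, mul_zero, add_zero] at this
    rwa [sigmaMap_of_supported s₂] at this
  have hp3h : p₃ = h := by
    rw [hp2, zero_add] at e₂
    exact mul_right_cancel₀ X0ne e₂
  have hp1 : p₁ = 0 := by
    have := congrArg (tauMap F) e₁
    simp only [map_add, map_mul, map_neg, map_pow, tauMap_X1, mul_zero, add_zero,
      zero_pow, neg_zero, ne_eq, OfNat.ofNat_ne_zero, not_false_eq_true] at this
    rwa [tauMap_of_supported s₁] at this
  have e₃ : p₄ + p₅ * (X 0 * X 1) + p₃ = 0 := by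
    have : (p₄ + p₅ * (X 0 * X 1) + p₃) * X 1 = 0 := by
      rw [hp1, zero_add] at e₁; linear_combination e₁ + X 1 * hp3h
    rcases mul_eq_zero.mp this with h' | h'
    · exact h'
    · exact absurd h' X1ne
  have hp4 : p₄ = 0 := by
    have := congrArg (sigmaMap F) e₃
    simp only [map_add, map_mul, map_zero, sigmaMap_X0, zero_mul, mul_zero, add_zero] at this
    rwa [sigmaMap_of_supported s₄, sigmaMap_of_supported0 s₃, hp3h, hh, map_zero,
      add_zero] at this
  have hp3 : p₃ = 0 := by
    have := congrArg (tauMap F) e₃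
    simp only [map_add, map_mul, map_zero, tauMap_X1, mul_zero, add_zero, zero_add] at this
    rwa [tauMap_of_supported s₃, hp4, map_zero, zero_add] at this
  have hp5 : p₅ = 0 := by
    rw [hp4, hp3, zero_add, add_zero] at e₃
    rcases mul_eq_zero.mp e₃ with h' | h'
    · exact h'
    · exact absurd h' (mul_ne_zero X0ne X1ne)
  exact ⟨hp1, hp2, hp3, hp4, hp5⟩

theorem mem_rels_elim {v : MvPolynomial (Fin 2) F × MvPolynomial (Fin 2) F}
    (hv : v ∈ popescuRels F) :
    ∃ h : MvPolynomial (Fin 2) F, constantCoeff h = 0 ∧ v = (-(h * X 1), h * X 0) := by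
  rw [popescuRels, Submodule.mem_span_pair] at hv
  obtain ⟨a, b, rfl⟩ := hv
  refine ⟨a * X 0 + b * X 1, by simp, ?_⟩
  simp only [popescuZ, Prod.smul_mk, smul_eq_mul, Prod.mk_add_mk, Prod.mk.injEq]
  constructor <;> ring

theorem mem_rels_intro (h : MvPolynomial (Fin 2) F) (i : Fin 2) :
    (X i * h) • popescuZ F ∈ popescuRels F := by
  fin_cases i
  · rw [mul_comm, mul_smul]
    exact Submodule.smul_mem _ h (Submodule.subset_span (Set.mem_insert _ _))
  · rw [mul_comm, mul_smul]
    exact Submodule.smul_mem _ h (Submodule.subset_span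
      (Set.mem_insert_of_mem _ rfl))

theorem span_range_X_eq_ker :
    Ideal.span (Set.range (X : Fin 2 → MvPolynomial (Fin 2) F))
      = RingHom.ker (constantCoeff : MvPolynomial (Fin 2) F →+* F) := by
  apply le_antisymm
  · rw [Ideal.span_le]
    rintro _ ⟨i, rfl⟩
    simp [RingHom.mem_ker]
  · intro p hp
    rw [RingHom.mem_ker] at hp
    have key : ∀ q : MvPolynomial (Fin 2) F,
        q - C (constantCoeff q)
          ∈ Ideal.span (Set.range (X : Fin 2 → MvPolynomial (Fin 2) F)) := by
      intro q
      induction q using MvPolynomial.induction_on with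
      | C a => simp
      | add p q hp hq =>
        have : p + q - C (constantCoeff (p + q))
            = (p - C (constantCoeff p)) + (q - C (constantCoeff q)) := by
          rw [map_add, map_add]; ring
        rw [this]; exact add_mem hp hq
      | mul_X p i _ =>
        have : p * X i - C (constantCoeff (p * X i)) = p * X i := by simp
        rw [this]
        exact Ideal.mul_mem_left _ _ (Ideal.subset_span ⟨i, rfl⟩)
    have := key p
    rwa [hp, map_zero, sub_zero] at this

/-- The five generators of the Stanley decomposition, as elements of `Se₁ ⊕ Se₂`. -/
noncomputable def pvec (F : Type*) [Field F] :
    Fin 5 → MvPolynomial (Fin 2) F × MvPolynomial (Fin 2) F :=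
  ![(1, 0), (0, 1), (0, X 0), (X 1, 0), (X 0 * X 1 ^ 2, 0)]

/-- The five sets of variables of the Stanley decomposition. -/
def Zvec : Fin 5 → Finset (Fin 2) := ![{0}, {1}, {0}, {1}, {0, 1}]

/-- The five generators, as elements of the Popescu module. -/
noncomputable def eltvec (F : Type*) [Field F] : Fin 5 → PopescuModule F :=
  fun i => Submodule.Quotient.mk (pvec F i)

/-- The five Stanley spaces. -/
noncomputable def Avec (F : Type*) [Field F] : Fin 5 → Submodule F (PopescuModule F) :=
  fun i => stanleySpace (K := F) (eltvec F i) (Zvec i)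

lemma coe_Zvec0 : ((Zvec 0 : Finset (Fin 2)) : Set (Fin 2)) = {0} := by simp [Zvec]
lemma coe_Zvec1 : ((Zvec 1 : Finset (Fin 2)) : Set (Fin 2)) = {1} := by simp [Zvec]
lemma coe_Zvec2 : ((Zvec 2 : Finset (Fin 2)) : Set (Fin 2)) = {0} := by simp [Zvec]
lemma coe_Zvec3 : ((Zvec 3 : Finset (Fin 2)) : Set (Fin 2)) = {1} := by simp [Zvec]
lemma coe_Zvec4 : ((Zvec 4 : Finset (Fin 2)) : Set (Fin 2)) = Set.univ := by
  ext i; fin_cases i <;> simp [Zvec]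

lemma pow0_mem_supported (a : ℕ) :
    (X 0 : MvPolynomial (Fin 2) F) ^ a ∈ MvPolynomial.supported F ({0} : Set (Fin 2)) :=
by
  apply Subalgebra.pow_mem
  rw [X_mem_supported]
  exact rfl

lemma pow1_mem_supported (b : ℕ) :
    (X 1 : MvPolynomial (Fin 2) F) ^ b ∈ MvPolynomial.supported F ({1} : Set (Fin 2)) :=
by
  apply Subalgebra.pow_mem
  rw [X_mem_supported]
  exact rfl

set_option maxHeartbeats 1000000 in
lemma smul_eltvec_mem (i : Fin 5) {p : MvPolynomial (Fin 2) F}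
    (hp : p ∈ MvPolynomial.supported F ((Zvec i : Finset (Fin 2)) : Set (Fin 2))) :
    p • eltvec F i ∈ ⨆ j, Avec F j := by
  have hle : Avec F i ≤ ⨆ j, Avec F j := le_iSup (Avec F) i
  apply hle
  show p • eltvec F i ∈ stanleySpace (K := F) (eltvec F i) (Zvec i)
  exact mem_stanleySpace_iff.mpr ⟨p, hp, rfl⟩

set_option maxHeartbeats 1000000 in
lemma mk_smul_pvec (i : Fin 5) (p : MvPolynomial (Fin 2) F) :
    (Submodule.Quotient.mk (p • pvec F i) : PopescuModule F) = p • eltvec F i :=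
  Submodule.Quotient.mk_smul _ _ _

lemma smul_pair (p f g : MvPolynomial (Fin 2) F) :
    p • ((f, g) : MvPolynomial (Fin 2) F × MvPolynomial (Fin 2) F) = (p * f, p * g) := rfl

lemma monomial_one_eq (m : Fin 2 →₀ ℕ) :
    (monomial m (1 : F) : MvPolynomial (Fin 2) F) = X 0 ^ (m 0) * X 1 ^ (m 1) := by
  have hm : m = Finsupp.single 0 (m 0) + Finsupp.single 1 (m 1) := by
    ext i; fin_cases i <;> simp [Finsupp.single_apply]
  rw [X_pow_eq_monomial, X_pow_eq_monomial, monomial_mul, one_mul, ← hm]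

lemma claimE1 (a b : ℕ) :
    (Submodule.Quotient.mk ((X 0 ^ a * X 1 ^ b, 0) :
      MvPolynomial (Fin 2) F × MvPolynomial (Fin 2) F) : PopescuModule F)
      ∈ ⨆ j, Avec F j := by
  rcases b with _ | b
  · have h : ((X 0 ^ a * X 1 ^ 0, 0) : MvPolynomial (Fin 2) F × MvPolynomial (Fin 2) F)
        = (X 0 ^ a : MvPolynomial (Fin 2) F) • pvec F 0 := by
      rw [pvec]; show _ = (X 0 ^ a : MvPolynomial (Fin 2) F) • ((1, 0) : MvPolynomial (Fin 2) F × MvPolynomial (Fin 2) F); rw [smul_pair]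
      simp
    rw [h, mk_smul_pvec]
    exact smul_eltvec_mem 0 (by rw [coe_Zvec0]; exact pow0_mem_supported a)
  · rcases a with _ | a
    · have h : ((X 0 ^ 0 * X 1 ^ (b + 1), 0) : MvPolynomial (Fin 2) F × MvPolynomial (Fin 2) F)
          = (X 1 ^ b : MvPolynomial (Fin 2) F) • pvec F 3 := by
        rw [pvec]; show _ = (X 1 ^ b : MvPolynomial (Fin 2) F) • ((X 1, 0) : MvPolynomial (Fin 2) F × MvPolynomial (Fin 2) F); rw [smul_pair]
        rw [Prod.mk.injEq]; constructor <;> simp [pow_succ]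
      rw [h, mk_smul_pvec]
      exact smul_eltvec_mem 3 (by rw [coe_Zvec3]; exact pow1_mem_supported b)
    · rcases b with _ | b
      · -- b = 1, a ≥ 1
        have heq : (Submodule.Quotient.mk ((X 0 ^ (a + 1) * X 1 ^ 1, 0) :
              MvPolynomial (Fin 2) F × MvPolynomial (Fin 2) F) : PopescuModule F)
            = Submodule.Quotient.mk ((0, X 0 ^ (a + 2)) :
              MvPolynomial (Fin 2) F × MvPolynomial (Fin 2) F) := by
          rw [Submodule.Quotient.eq]
          have hrel : ((X 0 ^ (a + 1) * X 1 ^ 1, 0) :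
                MvPolynomial (Fin 2) F × MvPolynomial (Fin 2) F) - (0, X 0 ^ (a + 2))
              = -((X 0 * X 0 ^ a : MvPolynomial (Fin 2) F) • popescuZ F) := by
            simp only [popescuZ, smul_pair, Prod.mk_sub_mk, Prod.neg_mk, Prod.mk.injEq]
            constructor <;> ring
          rw [hrel]
          exact Submodule.neg_mem _ (mem_rels_intro (X 0 ^ a) 0)
        rw [heq]
        have h : ((0, X 0 ^ (a + 2)) : MvPolynomial (Fin 2) F × MvPolynomial (Fin 2) F)
            = (X 0 ^ (a + 1) : MvPolynomial (Fin 2) F) • pvec F 2 := by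
          rw [pvec]; show _ = (X 0 ^ (a + 1) : MvPolynomial (Fin 2) F) • ((0, X 0) : MvPolynomial (Fin 2) F × MvPolynomial (Fin 2) F); rw [smul_pair]
          rw [Prod.mk.injEq]; constructor <;> simp [pow_succ]
        rw [h, mk_smul_pvec]
        exact smul_eltvec_mem 2 (by rw [coe_Zvec2]; exact pow0_mem_supported _)
      · -- b ≥ 2, a ≥ 1
        have h : ((X 0 ^ (a + 1) * X 1 ^ (b + 2), 0) :
              MvPolynomial (Fin 2) F × MvPolynomial (Fin 2) F)
            = (X 0 ^ a * X 1 ^ b : MvPolynomial (Fin 2) F) • pvec F 4 := by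
          rw [pvec]; show _ = (X 0 ^ a * X 1 ^ b : MvPolynomial (Fin 2) F) • ((X 0 * X 1 ^ 2, 0) : MvPolynomial (Fin 2) F × MvPolynomial (Fin 2) F)
          rw [smul_pair]
          rw [Prod.mk.injEq]; constructor <;> ring
        rw [h, mk_smul_pvec]
        refine smul_eltvec_mem 4 ?_
        rw [coe_Zvec4, supported_univ]
        exact Algebra.mem_top

lemma claimE2 (a b : ℕ) :
    (Submodule.Quotient.mk ((0, X 0 ^ a * X 1 ^ b) :
      MvPolynomial (Fin 2) F × MvPolynomial (Fin 2) F) : PopescuModule F)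
      ∈ ⨆ j, Avec F j := by
  rcases a with _ | a
  · have h : ((0, X 0 ^ 0 * X 1 ^ b) : MvPolynomial (Fin 2) F × MvPolynomial (Fin 2) F)
        = (X 1 ^ b : MvPolynomial (Fin 2) F) • pvec F 1 := by
      rw [pvec]; show _ = (X 1 ^ b : MvPolynomial (Fin 2) F) • ((0, 1) : MvPolynomial (Fin 2) F × MvPolynomial (Fin 2) F); rw [smul_pair]
      rw [Prod.mk.injEq]; constructor <;> simp
    rw [h, mk_smul_pvec]
    exact smul_eltvec_mem 1 (by rw [coe_Zvec1]; exact pow1_mem_supported b)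
  · rcases b with _ | b
    · have h : ((0, X 0 ^ (a + 1) * X 1 ^ 0) : MvPolynomial (Fin 2) F × MvPolynomial (Fin 2) F)
          = (X 0 ^ a : MvPolynomial (Fin 2) F) • pvec F 2 := by
        rw [pvec]; show _ = (X 0 ^ a : MvPolynomial (Fin 2) F) • ((0, X 0) : MvPolynomial (Fin 2) F × MvPolynomial (Fin 2) F); rw [smul_pair]
        rw [Prod.mk.injEq]; constructor <;> simp [pow_succ]
      rw [h, mk_smul_pvec]
      exact smul_eltvec_mem 2 (by rw [coe_Zvec2]; exact pow0_mem_supported a)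
    · -- a ≥ 1, b ≥ 1 : reduce to claimE1
      have heq : (Submodule.Quotient.mk ((0, X 0 ^ (a + 1) * X 1 ^ (b + 1)) :
            MvPolynomial (Fin 2) F × MvPolynomial (Fin 2) F) : PopescuModule F)
          = Submodule.Quotient.mk ((X 0 ^ a * X 1 ^ (b + 2), 0) :
            MvPolynomial (Fin 2) F × MvPolynomial (Fin 2) F) := by
        rw [Submodule.Quotient.eq]
        have hrel : ((0, X 0 ^ (a + 1) * X 1 ^ (b + 1)) :
              MvPolynomial (Fin 2) F × MvPolynomial (Fin 2) F)
              - (X 0 ^ a * X 1 ^ (b + 2), 0)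
            = ((X 1 * (X 0 ^ a * X 1 ^ b) : MvPolynomial (Fin 2) F)) • popescuZ F := by
          simp only [popescuZ, smul_pair, Prod.mk_sub_mk, Prod.neg_mk, Prod.mk.injEq]
          constructor <;> ring
        rw [hrel]
        exact mem_rels_intro _ 1
      rw [heq]
      exact claimE1 a (b + 2)

theorem iSup_Avec_eq_top : (⨆ j, Avec F j) = ⊤ := by
  rw [eq_top_iff]
  rintro m -
  obtain ⟨v, rfl⟩ := Submodule.Quotient.mk_surjective _ m
  obtain ⟨f, g⟩ := v
  have hA : ∀ f : MvPolynomial (Fin 2) F,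
      (Submodule.Quotient.mk ((f, 0) :
        MvPolynomial (Fin 2) F × MvPolynomial (Fin 2) F) : PopescuModule F)
        ∈ ⨆ j, Avec F j := by
    intro f
    induction f using MvPolynomial.induction_on' with
    | monomial m c =>
      have h1 : ((monomial m c, 0) : MvPolynomial (Fin 2) F × MvPolynomial (Fin 2) F)
          = (C c : MvPolynomial (Fin 2) F) • ((monomial m 1, 0) : MvPolynomial (Fin 2) F × MvPolynomial (Fin 2) F) := by
        rw [smul_pair]
        rw [Prod.mk.injEq]; constructor <;> simp [C_mul_monomial]
      rw [h1, Submodule.Quotient.mk_smul, ← algebraMap_eq, algebraMap_smul]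
      apply Submodule.smul_mem
      rw [monomial_one_eq]
      exact claimE1 (m 0) (m 1)
    | add p q hp hq =>
      have : ((p + q, 0) : MvPolynomial (Fin 2) F × MvPolynomial (Fin 2) F)
          = (p, 0) + (q, 0) := by simp
      rw [this, Submodule.Quotient.mk_add]
      exact add_mem hp hq
  have hB : ∀ g : MvPolynomial (Fin 2) F,
      (Submodule.Quotient.mk ((0, g) :
        MvPolynomial (Fin 2) F × MvPolynomial (Fin 2) F) : PopescuModule F)
        ∈ ⨆ j, Avec F j := by
    intro g
    induction g using MvPolynomial.induction_on' with
    | monomial m c =>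
      have h1 : ((0, monomial m c) : MvPolynomial (Fin 2) F × MvPolynomial (Fin 2) F)
          = (C c : MvPolynomial (Fin 2) F) • ((0, monomial m 1) : MvPolynomial (Fin 2) F × MvPolynomial (Fin 2) F) := by
        rw [smul_pair]
        rw [Prod.mk.injEq]; constructor <;> simp [C_mul_monomial]
      rw [h1, Submodule.Quotient.mk_smul, ← algebraMap_eq, algebraMap_smul]
      apply Submodule.smul_mem
      rw [monomial_one_eq]
      exact claimE2 (m 0) (m 1)
    | add p q hp hq =>
      have : ((0, p + q) : MvPolynomial (Fin 2) F × MvPolynomial (Fin 2) F)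
          = (0, p) + (0, q) := by simp
      rw [this, Submodule.Quotient.mk_add]
      exact add_mem hp hq
  have hsplit : ((f, g) : MvPolynomial (Fin 2) F × MvPolynomial (Fin 2) F)
      = (f, 0) + (0, g) := by simp
  rw [hsplit, Submodule.Quotient.mk_add]
  exact add_mem (hA f) (hB g)

theorem iSupIndep_Avec : iSupIndep (Avec F) := by
  rw [iSupIndep_iff_dfinsupp_lsum_injective]
  rw [injective_iff_map_eq_zero]
  intro w hw
  rw [lsum_eq_sum'] at hw
  have hmem : ∀ i, ∃ q ∈ MvPolynomial.supported F ((Zvec i : Finset (Fin 2)) : Set (Fin 2)),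
      q • eltvec F i = ((w i : PopescuModule F)) := fun i => mem_stanleySpace_iff.mp (w i).2
  choose p hps hpe using hmem
  have hsum : (Submodule.Quotient.mk (∑ i, p i • pvec F i) : PopescuModule F) = 0 := by
    have : (Submodule.Quotient.mk (∑ i, p i • pvec F i) : PopescuModule F)
        = ∑ i, (p i • eltvec F i) := by
      rw [← Submodule.mkQ_apply, map_sum]
      rfl
    rw [this]
    simp_rw [hpe]
    exact hw
  rw [Submodule.Quotient.mk_eq_zero] at hsum
  obtain ⟨h, hcc, hv⟩ := mem_rels_elim hsum
  have hsumeq : (∑ i, p i • pvec F i)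
      = (p 0 + p 3 * X 1 + p 4 * (X 0 * X 1 ^ 2), p 1 + p 2 * X 0) := by
    rw [Fin.sum_univ_five]
    show p 0 • ((1, 0) : MvPolynomial (Fin 2) F × MvPolynomial (Fin 2) F)
        + p 1 • ((0, 1) : MvPolynomial (Fin 2) F × MvPolynomial (Fin 2) F)
        + p 2 • ((0, X 0) : MvPolynomial (Fin 2) F × MvPolynomial (Fin 2) F)
        + p 3 • ((X 1, 0) : MvPolynomial (Fin 2) F × MvPolynomial (Fin 2) F)
        + p 4 • ((X 0 * X 1 ^ 2, 0) : MvPolynomial (Fin 2) F × MvPolynomial (Fin 2) F) = _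
    simp only [smul_pair, Prod.mk_add_mk, Prod.mk.injEq]
    constructor <;> ring
  rw [hsumeq] at hv
  rw [Prod.mk.injEq] at hv
  have s0 := hps 0; rw [coe_Zvec0] at s0
  have s1 := hps 1; rw [coe_Zvec1] at s1
  have s2 := hps 2; rw [coe_Zvec2] at s2
  have s3 := hps 3; rw [coe_Zvec3] at s3
  obtain ⟨q1, q2, q3, q4, q5⟩ := key_indep s0 s1 s2 s3 hcc hv.1 hv.2
  ext i
  rw [← hpe i]
  have hp0 : p i = 0 := by fin_cases i <;> assumption
  rw [hp0, zero_smul]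
  simp

lemma freeA {q : MvPolynomial (Fin 2) F}
    (h0 : q • (((1 : MvPolynomial (Fin 2) F), (0 : MvPolynomial (Fin 2) F))) ∈ popescuRels F) :
    q = 0 := by
  obtain ⟨h, hcc, hv⟩ := mem_rels_elim h0
  rw [smul_pair, mul_one, mul_zero, Prod.mk.injEq] at hv
  have hzero : h = 0 := by
    rcases mul_eq_zero.mp hv.2.symm with h' | h'
    · exact h'
    · exact absurd h' (X_ne_zero 0)
  rw [hv.1, hzero, zero_mul, neg_zero]

lemma freeB {q : MvPolynomial (Fin 2) F}
    (h0 : q • (((0 : MvPolynomial (Fin 2) F), (1 : MvPolynomial (Fin 2) F))) ∈ popescuRels F) :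
    q = 0 := by
  obtain ⟨h, hcc, hv⟩ := mem_rels_elim h0
  rw [smul_pair, mul_one, mul_zero, Prod.mk.injEq] at hv
  have hzero : h = 0 := by
    have := hv.1
    rw [eq_comm, neg_eq_zero] at this
    rcases mul_eq_zero.mp this with h' | h'
    · exact h'
    · exact absurd h' (X_ne_zero 1)
  rw [hv.2, hzero, zero_mul]

lemma freeC {q : MvPolynomial (Fin 2) F}
    (h0 : q • (((0 : MvPolynomial (Fin 2) F), X 0)) ∈ popescuRels F) : q = 0 := by
  obtain ⟨h, hcc, hv⟩ := mem_rels_elim h0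
  rw [smul_pair, mul_zero, Prod.mk.injEq] at hv
  have hzero : h = 0 := by
    have := hv.1
    rw [eq_comm, neg_eq_zero] at this
    rcases mul_eq_zero.mp this with h' | h'
    · exact h'
    · exact absurd h' (X_ne_zero 1)
  have h2 := hv.2
  rw [hzero, zero_mul] at h2
  rcases mul_eq_zero.mp h2 with h' | h'
  · exact h'
  · exact absurd h' (X_ne_zero 0)

lemma freeD {q : MvPolynomial (Fin 2) F}
    (h0 : q • ((X 1, (0 : MvPolynomial (Fin 2) F))) ∈ popescuRels F) : q = 0 := by
  obtain ⟨h, hcc, hv⟩ := mem_rels_elim h0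
  rw [smul_pair, mul_zero, Prod.mk.injEq] at hv
  have hzero : h = 0 := by
    rcases mul_eq_zero.mp hv.2.symm with h' | h'
    · exact h'
    · exact absurd h' (X_ne_zero 0)
  have h1 := hv.1
  rw [hzero, zero_mul, neg_zero] at h1
  rcases mul_eq_zero.mp h1 with h' | h'
  · exact h'
  · exact absurd h' (X_ne_zero 1)

lemma freeE {q : MvPolynomial (Fin 2) F}
    (h0 : q • ((X 0 * X 1 ^ 2, (0 : MvPolynomial (Fin 2) F))) ∈ popescuRels F) : q = 0 := by
  obtain ⟨h, hcc, hv⟩ := mem_rels_elim h0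
  rw [smul_pair, mul_zero, Prod.mk.injEq] at hv
  have hzero : h = 0 := by
    rcases mul_eq_zero.mp hv.2.symm with h' | h'
    · exact h'
    · exact absurd h' (X_ne_zero 0)
  have h1 := hv.1
  rw [hzero, zero_mul, neg_zero] at h1
  rcases mul_eq_zero.mp h1 with h' | h'
  · exact h'
  · exact absurd h' (mul_ne_zero (X_ne_zero 0) (pow_ne_zero 2 (X_ne_zero 1)))

section withG
variable (g : MultiGrading F 2 (PopescuModule F))
  (h1 : Submodule.Quotient.mk ((1 : MvPolynomial (Fin 2) F), (0 : MvPolynomial (Fin 2) F))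
      ∈ g.deg ![1, 0])
  (h2 : Submodule.Quotient.mk ((0 : MvPolynomial (Fin 2) F), (1 : MvPolynomial (Fin 2) F))
      ∈ g.deg ![0, 1])

include h2 in
lemma homogC : ∃ a, (Submodule.Quotient.mk (((0 : MvPolynomial (Fin 2) F), X 0))
    : PopescuModule F) ∈ g.deg a := by
  refine ⟨![0, 1] + fun i => ((Finsupp.single (0 : Fin 2) 1 i : ℕ) : ℤ), ?_⟩
  have heq : (Submodule.Quotient.mk (((0 : MvPolynomial (Fin 2) F), X 0)) : PopescuModule F)
      = (monomial (Finsupp.single (0 : Fin 2) 1) (1 : F)) •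
        (Submodule.Quotient.mk ((0 : MvPolynomial (Fin 2) F), (1 : MvPolynomial (Fin 2) F))
          : PopescuModule F) := by
    rw [← Submodule.Quotient.mk_smul]
    congr 1
    have hX : (monomial (Finsupp.single (0 : Fin 2) 1) (1 : F) : MvPolynomial (Fin 2) F) = X 0 := rfl
    rw [hX, smul_pair, mul_zero, mul_one]
  rw [heq]
  exact g.monomial_smul_mem (Finsupp.single (0 : Fin 2) 1) ![0, 1] _ h2

include h1 in
lemma homogD : ∃ a, (Submodule.Quotient.mk ((X 1, (0 : MvPolynomial (Fin 2) F)))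
    : PopescuModule F) ∈ g.deg a := by
  refine ⟨![1, 0] + fun i => ((Finsupp.single (1 : Fin 2) 1 i : ℕ) : ℤ), ?_⟩
  have heq : (Submodule.Quotient.mk ((X 1, (0 : MvPolynomial (Fin 2) F))) : PopescuModule F)
      = (monomial (Finsupp.single (1 : Fin 2) 1) (1 : F)) •
        (Submodule.Quotient.mk ((1 : MvPolynomial (Fin 2) F), (0 : MvPolynomial (Fin 2) F))
          : PopescuModule F) := by
    rw [← Submodule.Quotient.mk_smul]
    congr 1
    have hX : (monomial (Finsupp.single (1 : Fin 2) 1) (1 : F) : MvPolynomial (Fin 2) F) = X 1 := rfl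
    rw [hX, smul_pair, mul_zero, mul_one]
  rw [heq]
  exact g.monomial_smul_mem (Finsupp.single (1 : Fin 2) 1) ![1, 0] _ h1

include h1 in
lemma homogE : ∃ a, (Submodule.Quotient.mk ((X 0 * X 1 ^ 2, (0 : MvPolynomial (Fin 2) F)))
    : PopescuModule F) ∈ g.deg a := by
  refine ⟨![1, 0] + fun i =>
    (((Finsupp.single (0 : Fin 2) 1 + Finsupp.single (1 : Fin 2) 2 : Fin 2 →₀ ℕ) i : ℕ) : ℤ), ?_⟩
  have heq : (Submodule.Quotient.mk ((X 0 * X 1 ^ 2, (0 : MvPolynomial (Fin 2) F)))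
        : PopescuModule F)
      = (monomial (Finsupp.single (0 : Fin 2) 1 + Finsupp.single (1 : Fin 2) 2) (1 : F)) •
        (Submodule.Quotient.mk ((1 : MvPolynomial (Fin 2) F), (0 : MvPolynomial (Fin 2) F))
          : PopescuModule F) := by
    rw [← Submodule.Quotient.mk_smul]
    congr 1
    rw [monomial_one_eq, smul_pair, mul_zero, mul_one]
    congr 2 <;> simp [Finsupp.single_apply]
  rw [heq]
  exact g.monomial_smul_mem (Finsupp.single (0 : Fin 2) 1 + Finsupp.single (1 : Fin 2) 2) ![1, 0] _ h1

/-- The explicit Stanley decomposition of the Popescu module. -/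
noncomputable def D0 : StanleyDecomposition g where
  r := 5
  elt := eltvec F
  Z := Zvec
  homogeneous := by
    intro i
    fin_cases i
    · exact ⟨![1, 0], h1⟩
    · exact ⟨![0, 1], h2⟩
    · exact homogC g h2
    · exact homogD g h1
    · exact homogE g h1
  free := by
    intro i q hq h0
    rw [← mk_smul_pvec, Submodule.Quotient.mk_eq_zero] at h0
    fin_cases i
    · exact freeA h0
    · exact freeB h0
    · exact freeC h0
    · exact freeD h0
    · exact freeE h0
  isInternal := by
    rw [DirectSum.isInternal_submodule_iff_iSupIndep_and_iSup_eq_top]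
    exact ⟨iSupIndep_Avec, iSup_Avec_eq_top⟩

lemma D0_sdepth : (D0 g h1 h2).sdepth = 1 := by
  show (⨅ i : Fin 5, ((Zvec i).card : ℕ∞)) = 1
  apply le_antisymm
  · exact iInf_le_of_le 0 (by norm_num [Zvec])
  · refine le_iInf fun i => ?_
    fin_cases i <;> norm_num [Zvec]

end withG


theorem span_range_X_isPrime :
    (Ideal.span (Set.range (X : Fin 2 → MvPolynomial (Fin 2) F))).IsPrime := by
  rw [span_range_X_eq_ker]
  exact RingHom.ker_isPrime _

lemma mk_popescuZ_ne_zero :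
    (Submodule.Quotient.mk (popescuZ F) : PopescuModule F) ≠ 0 := by
  rw [Ne, Submodule.Quotient.mk_eq_zero]
  intro hmem
  obtain ⟨h, hcc, hv⟩ := mem_rels_elim hmem
  rw [popescuZ, Prod.mk.injEq] at hv
  have hx : (1 : MvPolynomial (Fin 2) F) * X 0 = h * X 0 := by rw [one_mul]; exact hv.2
  have h2 : h = 1 := (mul_right_cancel₀ (X_ne_zero 0) hx).symm
  rw [h2, map_one] at hcc
  exact one_ne_zero hcc

lemma X0_smul_mk_popescuZ :
    (X 0 : MvPolynomial (Fin 2) F) • (Submodule.Quotient.mk (popescuZ F) : PopescuModule F)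
      = 0 := by
  rw [← Submodule.Quotient.mk_smul, Submodule.Quotient.mk_eq_zero]
  have := mem_rels_intro (1 : MvPolynomial (Fin 2) F) 0
  rwa [mul_one] at this

set_option maxHeartbeats 1000000 in
set_option synthInstance.maxHeartbeats 400000 in
theorem sdepth_le_one (g : MultiGrading F 2 (PopescuModule F))
    (D : StanleyDecomposition g) : D.sdepth ≤ 1 := by
  by_contra hcon
  push_neg at hcon
  have hZ : ∀ i, D.Z i = Finset.univ := by
    intro i
    have hlt : (1 : ℕ∞) < ((D.Z i).card : ℕ∞) := lt_of_lt_of_le hcon (iInf_le _ i)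
    have hlt2 : 1 < (D.Z i).card := by exact_mod_cast hlt
    apply Finset.eq_univ_of_card
    refine le_antisymm ?_ ?_
    · simpa using Finset.card_le_univ (D.Z i)
    · simpa using (show 2 ≤ (D.Z i).card from hlt2)
  obtain ⟨w, hw⟩ := D.isInternal.surjective (Submodule.Quotient.mk (popescuZ F))
  rw [coeAddMonoidHom_eq_sum'] at hw
  have hmem : ∀ i, ∃ q ∈ MvPolynomial.supported F ((D.Z i : Finset (Fin 2)) : Set (Fin 2)),
      q • D.elt i = ((w i : PopescuModule F)) := fun i => mem_stanleySpace_iff.mp (w i).2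
  choose p hps hpe using hmem
  have hsupp : ∀ i (q : MvPolynomial (Fin 2) F),
      q ∈ MvPolynomial.supported F ((D.Z i : Finset (Fin 2)) : Set (Fin 2)) := by
    intro i q
    rw [hZ i, Finset.coe_univ, supported_univ]
    exact Algebra.mem_top
  have hmem' : ∀ i, (X 0 * p i) • D.elt i ∈ stanleySpace (K := F) (D.elt i) (D.Z i) :=
    fun i => mem_stanleySpace_iff.mpr ⟨X 0 * p i, hsupp i _, rfl⟩
  set w' : DirectSum (Fin D.r) (fun i => stanleySpace (K := F) (D.elt i) (D.Z i)) :=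
    ∑ i, DirectSum.of (fun i => stanleySpace (K := F) (D.elt i) (D.Z i)) i
      ⟨(X 0 * p i) • D.elt i, hmem' i⟩ with hw'def
  have hPhi : DirectSum.coeAddMonoidHom (fun i => stanleySpace (K := F) (D.elt i) (D.Z i)) w'
      = 0 := by
    rw [hw'def, map_sum]
    simp only [DirectSum.coeAddMonoidHom_of]
    have : ∀ i ∈ Finset.univ, ((⟨(X 0 * p i) • D.elt i, hmem' i⟩ :
        stanleySpace (K := F) (D.elt i) (D.Z i)) : PopescuModule F)
        = (X 0 : MvPolynomial (Fin 2) F) • ((w i : PopescuModule F)) := by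
      intro i _
      show (X 0 * p i) • D.elt i = (X 0 : MvPolynomial (Fin 2) F) • ((w i : PopescuModule F))
      rw [mul_smul, hpe i]
    rw [Finset.sum_congr rfl this, ← Finset.smul_sum, hw, X0_smul_mk_popescuZ]
  have hw0 : w' = 0 := by
    apply D.isInternal.injective
    rw [hPhi, map_zero]
  have hcomp : ∀ j, (X 0 * p j) • D.elt j = 0 := by
    intro j
    have hj : w' j = 0 := by rw [hw0]; rfl
    rw [hw'def, sum_of_apply'] at hj
    exact congrArg Subtype.val hj
  have hp0 : ∀ j, p j = 0 := by
    intro j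
    have := D.free j (X 0 * p j) (hsupp j _) (hcomp j)
    rcases mul_eq_zero.mp this with h' | h'
    · exact absurd h' (X_ne_zero 0)
    · exact h'
  apply mk_popescuZ_ne_zero (F := F)
  rw [← hw]
  refine Finset.sum_eq_zero fun i _ => ?_
  rw [← hpe i, hp0 i, zero_smul]

end Popescu

/-- For `S = F[x₁,x₂]` and `M = (Se₁ ⊕ Se₂)/(x₁z, x₂z)` with
`z = x₁e₂ - x₂e₁`, graded by `deg e₁ = (1,0)` and `deg e₂ = (0,1)`, one has
`depth M = 0` (i.e. `(x₁,x₂)` is an associated prime of `M`) and `sdepth M = 1`. -/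
theorem popescuModule_depth_eq_zero_and_sdepth_eq_one {F : Type*} [Field F]
    (g : MultiGrading F 2 (PopescuModule F))
    (h1 : Submodule.Quotient.mk ((1 : MvPolynomial (Fin 2) F), (0 : MvPolynomial (Fin 2) F))
        ∈ g.deg ![1, 0])
    (h2 : Submodule.Quotient.mk ((0 : MvPolynomial (Fin 2) F), (1 : MvPolynomial (Fin 2) F))
        ∈ g.deg ![0, 1]) :
    IsAssociatedPrime (Ideal.span (Set.range (X : Fin 2 → MvPolynomial (Fin 2) F)))
        (PopescuModule F) ∧
      stanleyDepth g = 1 := by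
  constructor
  · refine isAssociatedPrime_iff.mpr ⟨span_range_X_isPrime, Submodule.Quotient.mk (popescuZ F), le_antisymm ?_ ?_⟩
    · rw [Ideal.span_le]
      rintro _ ⟨i, rfl⟩
      rw [SetLike.mem_coe, Submodule.mem_colon_singleton, Submodule.mem_bot,
        ← Submodule.Quotient.mk_smul, Submodule.Quotient.mk_eq_zero]
      have := mem_rels_intro (1 : MvPolynomial (Fin 2) F) i
      rwa [mul_one] at this
    · intro q hq
      rw [Submodule.mem_colon_singleton, Submodule.mem_bot, ← Submodule.Quotient.mk_smul,
        Submodule.Quotient.mk_eq_zero] at hq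
      obtain ⟨h, hcc, hv⟩ := mem_rels_elim hq
      rw [show (popescuZ F) = ((-(X 1), X 0) : MvPolynomial (Fin 2) F × MvPolynomial (Fin 2) F)
          from rfl, smul_pair, Prod.mk.injEq] at hv
      have hqh : q = h := mul_right_cancel₀ (X_ne_zero 0) hv.2
      rw [span_range_X_eq_ker, RingHom.mem_ker, hqh]
      exact hcc
  · apply le_antisymm
    · exact iSup_le fun D => sdepth_le_one g D
    · calc (1 : ℕ∞) = (D0 g h1 h2).sdepth := (D0_sdepth g h1 h2).symm
        _ ≤ stanleyDepth g :=
          le_iSup (fun D : StanleyDecomposition g => D.sdepth) (D0 g h1 h2)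
end

section
/- Let $S=K[x_1,\ldots,x_n]$ and let $M_{n-1}$ be the cokernel of the map $\psi: S\to S^n=\bigoplus_{i=1}^n Se_i$ defined by $\psi(1)=x_1e_1+\cdots+x_ne_n$ (i.e., the $(n-1)$-st syzygy module of $K$ in the Koszul resolution). Then, writing $\bar e_i$ for the image of $e_i$ in $M_{n-1}$, one has the direct sum decomposition $M_{n-1}=S\bar e_1\oplus\cdots\oplus S\bar e_{n-1}\oplus K[x_1,\ldots,x_{n-1}]\bar e_n$, and $\operatorname{sdepth}(M_{n-1})=n-1$. -/
set_option maxHeartbeats 1000000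


open MvPolynomial

variable {K : Type*} [Field K] {n : ℕ} {M : Type*} [AddCommGroup M]
  [Module K M] [Module (MvPolynomial (Fin n) K) M]
  [IsScalarTower K (MvPolynomial (Fin n) K) M]

/-- The map `ψ : S → Sⁿ`, `ψ(1) = x₁e₁ + ⋯ + xₙeₙ`, whose cokernel is the
`(n-1)`-st syzygy module of `K` in the Koszul resolution. -/
noncomputable def koszulPsi (K : Type*) [Field K] (n : ℕ) :
    MvPolynomial (Fin n) K →ₗ[MvPolynomial (Fin n) K] (Fin n → MvPolynomial (Fin n) K) :=
  LinearMap.toSpanSingleton _ _ (fun i => X i)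

/-- The `(n-1)`-st syzygy module `M_(n-1) = Sⁿ/im ψ` of `K`. -/
abbrev SyzygyModule (K : Type*) [Field K] (n : ℕ) : Type _ :=
  (Fin n → MvPolynomial (Fin n) K) ⧸ LinearMap.range (koszulPsi K n)

/-! ### Auxiliary lemmas -/

lemma aux_dfinsupp_sum_single_apply {ι : Type*} [Fintype ι] [DecidableEq ι] {β : ι → Type*}
    [∀ i, AddCommMonoid (β i)] (x : ∀ i, β i) (j : ι) :
    (∑ i, DFinsupp.single i (x i)) j = x j := by
  classical
  rw [DFinsupp.finset_sum_apply]
  rw [Finset.sum_eq_single_of_mem j (Finset.mem_univ j)]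
  · exact DFinsupp.single_eq_same
  · intro i _ hij
    exact DFinsupp.single_eq_of_ne (Ne.symm hij)

lemma aux_lsum_eq_sum {ι : Type*} [Fintype ι] [DecidableEq ι] {R N : Type*} [Semiring R]
    [AddCommMonoid N] [Module R N] (F : ι → Submodule R N) (f : Π₀ i, F i) :
    DFinsupp.lsum ℕ (M := fun i => ↥(F i)) (fun i => (F i).subtype) f = ∑ i, (f i : N) := by
  classical
  have hf : f = ∑ i, DFinsupp.single i (f i) := by
    ext j; rw [aux_dfinsupp_sum_single_apply]
  conv_lhs => rw [hf]
  rw [map_sum]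
  simp [DFinsupp.lsum_single]

lemma aux_div (j : Fin n) (p : MvPolynomial (Fin n) K) :
    ∃ h q : MvPolynomial (Fin n) K,
      h ∈ MvPolynomial.supported K (↑(Finset.univ.erase j) : Set (Fin n)) ∧ p = h + X j * q := by
  induction p using MvPolynomial.induction_on with
  | C a => exact ⟨C a, 0, by simpa using Subalgebra.algebraMap_mem (MvPolynomial.supported K (↑(Finset.univ.erase j) : Set (Fin n))) a, by ring⟩
  | add p q hp hq =>
    obtain ⟨h1, q1, hh1, rfl⟩ := hp
    obtain ⟨h2, q2, hh2, rfl⟩ := hq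
    exact ⟨h1 + h2, q1 + q2, add_mem hh1 hh2, by ring⟩
  | mul_X p i hp =>
    obtain ⟨h, q, hh, rfl⟩ := hp
    by_cases hij : i = j
    · subst hij
      exact ⟨0, h + X i * q, zero_mem _, by ring⟩
    · refine ⟨h * X i, q * X i, mul_mem hh ?_, by ring⟩
      rw [MvPolynomial.X_mem_supported]
      simp [Finset.mem_erase, hij]

lemma aux_kill {j : Fin n} {p q : MvPolynomial (Fin n) K}
    (hp : p ∈ MvPolynomial.supported K (↑(Finset.univ.erase j) : Set (Fin n)))
    (hpq : p = q * X j) : q = 0 := by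
  ext d
  rw [coeff_zero, ← MvPolynomial.coeff_mul_X d j q, ← hpq]
  by_contra h
  have hd : (d + Finsupp.single j 1) ∈ p.support := MvPolynomial.mem_support_iff.mpr h
  have hj : j ∈ p.vars := by
    rw [MvPolynomial.mem_vars]
    refine ⟨d + Finsupp.single j 1, hd, ?_⟩
    simp [Finsupp.mem_support_iff]
  have := (MvPolynomial.mem_supported.mp hp) hj
  simp at this

lemma aux_mem_stanleySpace (m : M) (Z : Finset (Fin n)) (x : M) :
    x ∈ stanleySpace (K := K) m Z ↔
      ∃ p ∈ MvPolynomial.supported K (↑Z : Set (Fin n)), p • m = x := by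
  simp [stanleySpace, Submodule.mem_map, LinearMap.toSpanSingleton_apply]

lemma aux_smul_mk (i : Fin n) (p : MvPolynomial (Fin n) K) :
    p • (Submodule.Quotient.mk (Pi.single i (1 : MvPolynomial (Fin n) K)) : SyzygyModule K n)
      = Submodule.Quotient.mk (Pi.single i p) := by
  rw [← Submodule.Quotient.mk_smul]
  congr 1
  ext j
  rcases eq_or_ne j i with rfl | hj
  · simp
  · simp [Pi.single_eq_of_ne hj]

lemma aux_mem_range (f : Fin n → MvPolynomial (Fin n) K) :
    f ∈ LinearMap.range (koszulPsi K n) ↔ ∃ q, ∀ i, f i = q * X i := by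
  constructor
  · rintro ⟨q, rfl⟩
    exact ⟨q, fun i => rfl⟩
  · rintro ⟨q, hq⟩
    exact ⟨q, by funext i; exact (hq i).symm⟩

lemma aux_mk_eq_sum (p : Fin n → MvPolynomial (Fin n) K) :
    (Submodule.Quotient.mk p : SyzygyModule K n) = ∑ i, p i •
      (Submodule.Quotient.mk (Pi.single i (1 : MvPolynomial (Fin n) K)) : SyzygyModule K n) := by
  have h : p = ∑ i, Pi.single i (p i) := (Finset.univ_sum_single p).symm
  conv_lhs => rw [h]
  rw [← Submodule.mkQ_apply, map_sum]
  simp_rw [Submodule.mkQ_apply, aux_smul_mk]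

lemma aux_key (hn : 0 < n) (p : Fin n → MvPolynomial (Fin n) K)
    (hlast : p ⟨n-1, Nat.sub_lt hn Nat.one_pos⟩ ∈ MvPolynomial.supported K
      (↑(Finset.univ.erase (⟨n-1, Nat.sub_lt hn Nat.one_pos⟩ : Fin n)) : Set (Fin n)))
    (h0 : (Submodule.Quotient.mk p : SyzygyModule K n) = 0) : p = 0 := by
  rw [Submodule.Quotient.mk_eq_zero] at h0
  obtain ⟨q, hq⟩ := (aux_mem_range p).mp h0
  have hq0 : q = 0 := aux_kill hlast (hq _)
  funext i
  rw [hq i, hq0, zero_mul]; rfl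

lemma aux_part1 (hn : 0 < n) :
    DirectSum.IsInternal (fun i : Fin n =>
      stanleySpace (K := K)
        (Submodule.Quotient.mk (Pi.single i (1 : MvPolynomial (Fin n) K)) : SyzygyModule K n)
        (if i = (⟨n - 1, Nat.sub_lt hn Nat.one_pos⟩ : Fin n) then Finset.univ.erase i else Finset.univ)) := by
  classical
  set lst : Fin n := ⟨n - 1, by omega⟩ with hlst
  set eb : Fin n → SyzygyModule K n :=
    fun i => Submodule.Quotient.mk (Pi.single i (1 : MvPolynomial (Fin n) K)) with heb
  set F : Fin n → Submodule K (SyzygyModule K n) :=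
    fun i => stanleySpace (K := K) (eb i) (if i = lst then Finset.univ.erase i else Finset.univ)
    with hF
  apply DirectSum.isInternal_submodule_of_iSupIndep_of_iSup_eq_top
  · -- independence
    apply iSupIndep_of_dfinsupp_lsum_injective
    rw [← LinearMap.ker_eq_bot, Submodule.eq_bot_iff]
    intro f hf
    rw [LinearMap.mem_ker, aux_lsum_eq_sum] at hf
    have hmem : ∀ i, ((f i : SyzygyModule K n)) ∈ F i := fun i => (f i).2
    choose p hp hps using fun i => (aux_mem_stanleySpace (eb i) _ _).mp (hmem i)
    have hsum : (Submodule.Quotient.mk (fun i => p i) : SyzygyModule K n) = 0 := by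
      rw [aux_mk_eq_sum]
      calc (∑ i, p i • eb i) = ∑ i, ((f i : SyzygyModule K n)) :=
            Finset.sum_congr rfl fun i _ => hps i
        _ = 0 := hf
    have hp0 : (fun i => p i) = 0 := by
      apply aux_key hn
      · have := hp lst
        rwa [if_pos rfl] at this
      · exact hsum
    ext i
    have hpi : p i = 0 := congrFun hp0 i
    have h2 : ((f i : SyzygyModule K n)) = 0 := by
      rw [← hps i, hpi, zero_smul]
    simpa using h2
  · -- iSup = ⊤
    rw [eq_top_iff]
    rintro x -
    obtain ⟨gv, rfl⟩ := Submodule.Quotient.mk_surjective _ x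
    rw [aux_mk_eq_sum]
    apply Submodule.sum_mem
    intro i _
    by_cases hi : i = lst
    · obtain ⟨h, q, hh, hrep⟩ := aux_div (K := K) i (gv i)
      have h0 : (∑ j, (X j : MvPolynomial (Fin n) K) • eb j) = 0 := by
        rw [← aux_mk_eq_sum, Submodule.Quotient.mk_eq_zero]
        exact ⟨1, by simp [koszulPsi]⟩
      have hXlast : (X i : MvPolynomial (Fin n) K) • eb i
          = - ∑ j ∈ Finset.univ.erase i, (X j : MvPolynomial (Fin n) K) • eb j := by
        have h1 := Finset.add_sum_erase Finset.univ
          (fun j => (X j : MvPolynomial (Fin n) K) • eb j) (Finset.mem_univ i)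
        rw [h0] at h1
        exact eq_neg_of_add_eq_zero_left h1
      have hgoal : gv i • eb i
          = h • eb i + - ∑ j ∈ Finset.univ.erase i, (q * X j) • eb j := by
        rw [hrep, add_smul, mul_comm (X i) q, mul_smul, hXlast, smul_neg, Finset.smul_sum]
        simp_rw [smul_smul]
      change gv i • eb i ∈ _
      rw [hgoal]
      apply add_mem
      · apply Submodule.mem_iSup_of_mem i
        show _ ∈ stanleySpace (K := K) (eb i) _
        rw [aux_mem_stanleySpace]
        refine ⟨h, ?_, rfl⟩
        rwa [if_pos hi]
      · apply neg_mem
        apply Submodule.sum_mem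
        intro j hj
        have hjne : j ≠ i := (Finset.mem_erase.mp hj).1
        apply Submodule.mem_iSup_of_mem j
        show _ ∈ stanleySpace (K := K) (eb j) _
        rw [aux_mem_stanleySpace]
        refine ⟨q * X j, ?_, rfl⟩
        rw [if_neg (by rw [hi] at hjne; exact hjne), Finset.coe_univ, MvPolynomial.supported_univ]
        trivial
    · change gv i • eb i ∈ _
      apply Submodule.mem_iSup_of_mem i
      show _ ∈ stanleySpace (K := K) (eb i) _
      rw [aux_mem_stanleySpace]
      refine ⟨gv i, ?_, rfl⟩
      rw [if_neg hi, Finset.coe_univ, MvPolynomial.supported_univ]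
      trivial

lemma aux_free (hn : 0 < n) (i : Fin n)
    (p : MvPolynomial (Fin n) K)
    (hp : p ∈ MvPolynomial.supported K
      (↑(if i = (⟨n - 1, Nat.sub_lt hn Nat.one_pos⟩ : Fin n) then Finset.univ.erase i else Finset.univ) :
        Set (Fin n)))
    (h0 : p • (Submodule.Quotient.mk (Pi.single i (1 : MvPolynomial (Fin n) K))
      : SyzygyModule K n) = 0) : p = 0 := by
  rw [aux_smul_mk, Submodule.Quotient.mk_eq_zero] at h0
  obtain ⟨q, hq⟩ := (aux_mem_range _).mp h0
  have hpi : p = q * X i := by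
    have := hq i
    rwa [Pi.single_eq_same] at this
  by_cases hi : i = (⟨n - 1, by omega⟩ : Fin n)
  · rw [if_pos hi] at hp
    rw [hpi, aux_kill hp hpi, zero_mul]
  · have hlst := hq ⟨n - 1, by omega⟩
    rw [Pi.single_eq_of_ne (Ne.symm hi)] at hlst
    have hq0 : q = 0 := by
      rcases mul_eq_zero.mp hlst.symm with h | h
      · exact h
      · exact absurd h (MvPolynomial.X_ne_zero _)
    rw [hpi, hq0, zero_mul]

lemma aux_no_all_univ (hn : 0 < n) {g : MultiGrading K n (SyzygyModule K n)}
    (D : StanleyDecomposition g) (hZ : ∀ i, D.Z i = Finset.univ) : False := by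
  classical
  set S := MvPolynomial (Fin n) K
  set N := LinearMap.range (koszulPsi K n) with hN
  -- the linear map (Fin D.r → S) → M
  set Φ : (Fin D.r → S) →ₗ[S] SyzygyModule K n :=
    { toFun := fun c => ∑ i, c i • D.elt i
      map_add' := fun a b => by
        simp only [Pi.add_apply, add_smul]
        rw [Finset.sum_add_distrib]
      map_smul' := fun s c => by
        simp only [Pi.smul_apply, smul_eq_mul, RingHom.id_apply, mul_smul]
        rw [Finset.smul_sum] } with hΦ
  have hmemSS : ∀ (i : Fin D.r) (p : S),
      p • D.elt i ∈ stanleySpace (K := K) (D.elt i) (D.Z i) := by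
    intro i p
    rw [aux_mem_stanleySpace]
    exact ⟨p, by rw [hZ i, Finset.coe_univ, MvPolynomial.supported_univ]; trivial, rfl⟩
  have hΦsingle : ∀ (i : Fin D.r) (p : S), Φ (Pi.single i p) = p • D.elt i := by
    intro i p
    have hc : Φ (Pi.single i p) = ∑ j, (Pi.single i p : Fin D.r → S) j • D.elt j := by
      rw [hΦ]; rfl
    rw [hc, Finset.sum_eq_single_of_mem i (Finset.mem_univ i)]
    · rw [Pi.single_eq_same]
    · intro j _ hj
      rw [Pi.single_eq_of_ne hj, zero_smul]
  have hsurj : Function.Surjective Φ := by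
    intro x
    have htop := D.isInternal.submodule_iSup_eq_top
    have hx : x ∈ ⨆ i, stanleySpace (K := K) (D.elt i) (D.Z i) := htop ▸ Submodule.mem_top
    have hle : (⨆ i, stanleySpace (K := K) (D.elt i) (D.Z i)) ≤
        (LinearMap.range Φ).restrictScalars K := by
      apply iSup_le
      intro i y hy
      obtain ⟨p, hp, rfl⟩ := (aux_mem_stanleySpace _ _ _).mp hy
      exact ⟨Pi.single i p, hΦsingle i p⟩
    exact hle hx
  have hinj : Function.Injective Φ := by
    rw [← LinearMap.ker_eq_bot, Submodule.eq_bot_iff]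
    intro c hc
    rw [LinearMap.mem_ker] at hc
    have hInd := D.isInternal.submodule_iSupIndep
    have hLsumInj := hInd.dfinsupp_lsum_injective
    set d : Π₀ i, ↥(stanleySpace (K := K) (D.elt i) (D.Z i)) :=
      ∑ i, DFinsupp.single i ⟨c i • D.elt i, hmemSS i (c i)⟩ with hd
    have hlsum : DFinsupp.lsum ℕ
        (M := fun i => ↥(stanleySpace (K := K) (D.elt i) (D.Z i)))
        (fun i => (stanleySpace (K := K) (D.elt i) (D.Z i)).subtype) d = 0 := by
      rw [hd, map_sum]
      simp only [DFinsupp.lsum_single, Submodule.coe_subtype]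
      exact hc
    have hd0 : d = 0 := hLsumInj (by rw [hlsum, map_zero])
    funext i
    have hdi : (d i : SyzygyModule K n) = c i • D.elt i := by
      rw [hd, aux_dfinsupp_sum_single_apply]
    rw [hd0] at hdi
    have : c i • D.elt i = 0 := by
      rw [← hdi]; simp
    have hci := D.free i (c i)
      (by rw [hZ i, Finset.coe_univ, MvPolynomial.supported_univ]; trivial) this
    exact hci
  -- M is projective, so the quotient map splits
  have hproj : Module.Projective S (SyzygyModule K n) :=
    Module.Projective.of_equiv (LinearEquiv.ofBijective Φ ⟨hinj, hsurj⟩)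
  obtain ⟨σ, hσ⟩ := Module.projective_lifting_property N.mkQ
    (LinearMap.id : SyzygyModule K n →ₗ[S] SyzygyModule K n) (Submodule.mkQ_surjective N)
  -- ψ is injective
  have ψinj : Function.Injective (koszulPsi K n) := by
    rw [← LinearMap.ker_eq_bot, Submodule.eq_bot_iff]
    intro p hp
    rw [LinearMap.mem_ker] at hp
    have := congrFun hp ⟨0, hn⟩
    have h2 : p * X (⟨0, hn⟩ : Fin n) = 0 := this
    rcases mul_eq_zero.mp h2 with h | h
    · exact h
    · exact absurd h (MvPolynomial.X_ne_zero _)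
  set eψ := LinearEquiv.ofInjective (koszulPsi K n) ψinj with heψ
  have hrange : ∀ x : Fin n → S, x - σ (N.mkQ x) ∈ N := by
    intro x
    have : N.mkQ (x - σ (N.mkQ x)) = 0 := by
      rw [map_sub]
      have : N.mkQ (σ (N.mkQ x)) = N.mkQ x := congrFun (congrArg DFunLike.coe hσ) (N.mkQ x)
      rw [this, sub_self]
    rwa [← LinearMap.mem_ker, Submodule.ker_mkQ] at this
  set qc : (Fin n → S) →ₗ[S] N :=
    LinearMap.codRestrict N (LinearMap.id - σ ∘ₗ N.mkQ) hrange with hqc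
  set pmap : (Fin n → S) →ₗ[S] S := eψ.symm.toLinearMap ∘ₗ qc with hpmap
  have hvN : (fun i => X i : Fin n → S) ∈ N := ⟨1, by simp [koszulPsi]⟩
  have hv : pmap (fun i => X i) = 1 := by
    have h1 : qc (fun i => X i) = ⟨(fun i => X i), hvN⟩ := by
      apply Subtype.ext
      show (fun i => X i : Fin n → S) - σ (N.mkQ fun i => X i) = (fun i => X i : Fin n → S)
      have : N.mkQ (fun i => X i) = 0 := by
        rw [Submodule.mkQ_apply, Submodule.Quotient.mk_eq_zero]
        exact hvN
      rw [this, map_zero, sub_zero]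
    show eψ.symm (qc fun i => X i) = 1
    rw [h1, LinearEquiv.symm_apply_eq]
    apply Subtype.ext
    rw [LinearEquiv.ofInjective_apply]
    show (fun i => X i : Fin n → S) = koszulPsi K n 1
    funext i
    simp [koszulPsi]
  have hdecomp : (fun i => X i : Fin n → S) = ∑ i, (X i : S) • (Pi.single i (1 : S) : Fin n → S) := by
    funext j
    rw [Finset.sum_apply, Finset.sum_eq_single_of_mem j (Finset.mem_univ j)]
    · rw [Pi.smul_apply, Pi.single_eq_same, smul_eq_mul, mul_one]
    · intro i _ hij
      rw [Pi.smul_apply, Pi.single_eq_of_ne (Ne.symm hij), smul_eq_mul, mul_zero]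
  have hone0 : pmap (fun i => X i) = ∑ i, X i * pmap (Pi.single i (1 : S)) := by
    conv_lhs => rw [hdecomp]
    rw [map_sum]
    simp_rw [map_smul, smul_eq_mul]
  have hone : (1 : S) = ∑ i, X i * pmap (Pi.single i (1 : S)) := by
    rw [← hone0, hv]
  have := congrArg MvPolynomial.constantCoeff hone
  rw [map_one, map_sum] at this
  simp only [map_mul, MvPolynomial.constantCoeff_X, zero_mul, Finset.sum_const_zero] at this
  exact one_ne_zero this

/-- Let `M_(n-1)` be the cokernel of `ψ : S → Sⁿ`,
`ψ(1) = x₁e₁ + ⋯ + xₙeₙ`, where `S = K[x₁,…,xₙ]`.  Then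
`M_(n-1) = Sē₁ ⊕ ⋯ ⊕ Sē_(n-1) ⊕ K[x₁,…,x_(n-1)]ēₙ` (a Stanley decomposition),
and `sdepth M_(n-1) = n - 1`. -/
theorem syzygyModule_decomposition_and_sdepth {K : Type*} [Field K] {n : ℕ} (hn : 0 < n)
    (g : MultiGrading K n (SyzygyModule K n))
    (hg : ∀ i : Fin n, (Submodule.Quotient.mk (Pi.single i (1 : MvPolynomial (Fin n) K))
        : SyzygyModule K n) ∈ g.deg (fun j => if j = i then 0 else 1)) :
    DirectSum.IsInternal (fun i : Fin n =>
      stanleySpace (K := K)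
        (Submodule.Quotient.mk (Pi.single i (1 : MvPolynomial (Fin n) K)) : SyzygyModule K n)
        (if i = (⟨n - 1, by omega⟩ : Fin n) then Finset.univ.erase i else Finset.univ)) ∧
    stanleyDepth g = ((n - 1 : ℕ) : ℕ∞) := by
  classical
  refine ⟨aux_part1 hn, ?_⟩
  set lst : Fin n := ⟨n - 1, by omega⟩ with hlst
  set D0 : StanleyDecomposition g :=
    { r := n
      elt := fun i => Submodule.Quotient.mk (Pi.single i (1 : MvPolynomial (Fin n) K))
      Z := fun i => if i = lst then Finset.univ.erase i else Finset.univ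
      homogeneous := fun i => ⟨_, hg i⟩
      free := fun i p hp h0 => aux_free hn i p hp h0
      isInternal := aux_part1 hn } with hD0
  have hcard : D0.sdepth = ((n - 1 : ℕ) : ℕ∞) := by
    rw [StanleyDecomposition.sdepth]
    apply le_antisymm
    · apply iInf_le_of_le lst
      have hz : D0.Z lst = Finset.univ.erase lst := if_pos rfl
      rw [hz, Finset.card_erase_of_mem (Finset.mem_univ lst), Finset.card_univ, Fintype.card_fin]
    · apply le_iInf
      intro i
      by_cases hi : i = lst
      · have hz : D0.Z i = Finset.univ.erase i := if_pos hi
        rw [hz, Finset.card_erase_of_mem (Finset.mem_univ i), Finset.card_univ, Fintype.card_fin]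
      · have hz : D0.Z i = Finset.univ := if_neg hi
        rw [hz, Finset.card_univ, Fintype.card_fin]
        exact_mod_cast Nat.sub_le n 1
  apply le_antisymm
  · apply iSup_le
    intro D
    by_contra hle
    rw [not_le] at hle
    have hZ : ∀ i, D.Z i = Finset.univ := by
      intro i
      have h1 : ((n - 1 : ℕ) : ℕ∞) < ((D.Z i).card : ℕ∞) :=
        lt_of_lt_of_le hle (iInf_le _ i)
      have h2 : n - 1 < (D.Z i).card := by exact_mod_cast h1
      have h3 : (D.Z i).card ≤ n := by
        have := Finset.card_le_univ (D.Z i)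
        simpa [Fintype.card_fin] using this
      apply Finset.eq_univ_of_card
      rw [Fintype.card_fin]
      omega
    exact aux_no_all_univ hn D hZ
  · rw [← hcard]
    exact le_iSup (fun D : StanleyDecomposition g => D.sdepth) D0
end

section
/- Let $n,k$ be positive integers and $a=\lceil n/(k+1)\rceil$. Then $\operatorname{sdepth}(\mathbf{m}^k)\le a$, where $\mathbf{m}=(x_1,\ldots,x_n)\subset S=K[x_1,\ldots,x_n]$. In particular, if $k\ge n-1$ then $\operatorname{sdepth}(\mathbf{m}^k)=1$. -/
open MvPolynomial

variable {K : Type*} [Field K] {n : ℕ} {M : Type*} [AddCommGroup M]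
  [Module K M] [Module (MvPolynomial (Fin n) K) M]
  [IsScalarTower K (MvPolynomial (Fin n) K) M]

/-- The maximal irrelevant ideal `𝔪 = (x₁,…,xₙ)` of `S = K[x₁,…,xₙ]`. -/
noncomputable def maxIdeal (K : Type*) [Field K] (n : ℕ) : Ideal (MvPolynomial (Fin n) K) :=
  Ideal.span (Set.range X)


section Helpers
variable {k : ℕ}

lemma monomial_mem_maxIdeal_pow {k : ℕ} {c : Fin n →₀ ℕ} (hc : k ≤ ∑ i, c i) (r : K) :
    monomial c r ∈ maxIdeal K n ^ k := by
  induction k generalizing c with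
  | zero => simp
  | succ k ih =>
    have hex : ∃ i, c i ≠ 0 := by
      by_contra h
      push_neg at h
      simp [h] at hc
    obtain ⟨i, hi⟩ := hex
    set d : Fin n →₀ ℕ := c - Finsupp.single i 1 with hdef
    have hd : c = d + Finsupp.single i 1 := by
      ext j
      rcases eq_or_ne j i with rfl | hj
      · simp [hdef, Nat.sub_add_cancel (Nat.one_le_iff_ne_zero.2 hi)]
      · simp [hdef, Finsupp.single_apply, Ne.symm hj]
    have hsum : k ≤ ∑ j, d j := by
      have h1 : (∑ j, d j) + ∑ j, (Finsupp.single i (1:ℕ)) j = ∑ j, c j := by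
        rw [← Finset.sum_add_distrib]
        exact Finset.sum_congr rfl fun j _ => by
          conv_rhs => rw [hd]
          simp
      have h2 : ∑ j, (Finsupp.single i (1:ℕ)) j = 1 := by
        simp [Finsupp.single_apply]
      omega
    have : monomial c r = monomial d r * X i := by
      rw [X, monomial_mul, mul_one, ← hd]
    rw [this, pow_succ]
    exact Ideal.mul_mem_mul (ih hsum) (Ideal.subset_span ⟨i, rfl⟩)

lemma deg_of_mem_maxIdeal_pow {k : ℕ} {p : MvPolynomial (Fin n) K}
    (hp : p ∈ maxIdeal K n ^ k) : ∀ c ∈ p.support, k ≤ ∑ i, c i := by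
  classical
  induction k generalizing p with
  | zero => intro c _; exact Nat.zero_le _
  | succ k ih =>
    rw [pow_succ] at hp
    refine Submodule.mul_induction_on hp ?_ ?_
    · intro a ha b hb c hc
      have hsub := MvPolynomial.support_mul a b hc
      rw [Finset.mem_add] at hsub
      obtain ⟨c₁, hc₁, c₂, hc₂, rfl⟩ := hsub
      have h1 : k ≤ ∑ i, c₁ i := ih ha c₁ hc₁
      have h2 : 1 ≤ ∑ i, c₂ i := by
        rw [maxIdeal, ← Set.image_univ] at hb
        obtain ⟨i, -, hi⟩ := mem_ideal_span_X_image.1 hb c₂ hc₂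
        calc 1 ≤ c₂ i := Nat.one_le_iff_ne_zero.2 hi
        _ ≤ ∑ j, c₂ j := Finset.single_le_sum (fun _ _ => Nat.zero_le _) (Finset.mem_univ i)
      have : ∑ i, (c₁ + c₂) i = (∑ i, c₁ i) + ∑ i, c₂ i := by
        simp [Finset.sum_add_distrib]
      omega
    · intro x y hx hy c hc
      have := Finsupp.support_add hc
      rw [Finset.mem_union] at this
      rcases this with h | h
      exacts [hx c h, hy c h]

abbrev SdepthProof.Mk (K : Type*) [Field K] (n k : ℕ) := ↥(maxIdeal K n ^ k)

namespace SdepthProof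

local notation "S" => MvPolynomial (Fin n) K


@[simp] lemma coe_smulS (p : S) (m : SdepthProof.Mk K n k) : ((p • m : SdepthProof.Mk K n k) : S) = p * (m : S) := rfl

@[simp] lemma coe_smulK (r : K) (m : SdepthProof.Mk K n k) : ((r • m : SdepthProof.Mk K n k) : S) = r • (m : S) := rfl

/-- the monomial component of `m` at `c`, as an element of `SdepthProof.Mk K n k`. -/
noncomputable def comp (m : SdepthProof.Mk K n k) (c : Fin n →₀ ℕ) (hc : c ∈ (m : S).support) : SdepthProof.Mk K n k :=
  ⟨monomial c (coeff c (m : S)), monomial_mem_maxIdeal_pow (deg_of_mem_maxIdeal_pow m.2 c hc) _⟩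

lemma iota_inj : Function.Injective (fun (c : Fin n →₀ ℕ) => fun i => (c i : ℤ)) := by
  intro c c' h
  ext i
  simpa using congrFun h i

lemma homog_is_monomial (g : MultiGrading K n (SdepthProof.Mk K n k))
    (hg : ∀ (c : Fin n →₀ ℕ) (hc : monomial c (1 : K) ∈ maxIdeal K n ^ k),
      (⟨monomial c (1 : K), hc⟩ : SdepthProof.Mk K n k) ∈ g.deg (fun i => (c i : ℤ)))
    {m : SdepthProof.Mk K n k} {a : Fin n → ℤ} (hm : m ∈ g.deg a) (hm0 : m ≠ 0) :
    ∃ (c : Fin n →₀ ℕ) (r : K), r ≠ 0 ∧ (m : S) = monomial c r ∧ k ≤ ∑ i, c i := by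
  classical
  set F : (Fin n →₀ ℕ) → SdepthProof.Mk K n k :=
    fun c => if hc : c ∈ (m : S).support then comp m c hc else 0 with hF
  have hFc : ∀ c ∈ (m:S).support, ((F c : SdepthProof.Mk K n k) : S) = monomial c (coeff c (m:S)) := by
    intro c hc
    simp only [hF]
    rw [dif_pos hc]
    rfl
  have hcomp : ∀ c ∈ (m : S).support, F c ∈ g.deg (fun i => (c i : ℤ)) := by
    intro c hc
    have h1 : monomial c (1:K) ∈ maxIdeal K n ^ k :=
      monomial_mem_maxIdeal_pow (deg_of_mem_maxIdeal_pow m.2 c hc) _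
    have : F c = (coeff c (m : S)) • (⟨monomial c 1, h1⟩ : SdepthProof.Mk K n k) := by
      apply Subtype.ext
      rw [hFc c hc]
      simp [smul_monomial]
    rw [this]
    exact Submodule.smul_mem _ _ (hg c h1)
  have hsum : m = ∑ c ∈ (m:S).support, F c := by
    apply Subtype.ext
    push_cast
    rw [Finset.sum_congr rfl hFc]
    exact (support_sum_monomial_coeff (m:S)).symm
  have key : ∀ c ∈ (m:S).support, (fun i => ((c : Fin n →₀ ℕ) i : ℤ)) = a := by
    by_contra hk
    push_neg at hk
    obtain ⟨c₀, hc₀, hne⟩ := hk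
    set N : Submodule K (SdepthProof.Mk K n k) :=
      ⨆ (b) (_ : b ≠ (fun i => ((c₀ : Fin n →₀ ℕ) i : ℤ))), g.deg b with hN
    have hmN : m ∈ N := by
      refine Submodule.mem_iSup_of_mem a (Submodule.mem_iSup_of_mem ?_ hm)
      exact fun h => hne h.symm
    have hothers : ∀ c ∈ (m:S).support.erase c₀, F c ∈ N := by
      intro c hcmem
      have hcc : c ≠ c₀ := Finset.ne_of_mem_erase hcmem
      refine Submodule.mem_iSup_of_mem _ (Submodule.mem_iSup_of_mem ?_
        (hcomp c (Finset.mem_of_mem_erase hcmem)))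
      exact fun h => hcc (iota_inj h)
    have hsplit : m = F c₀ + ∑ c ∈ (m:S).support.erase c₀, F c := by
      conv_lhs => rw [hsum]
      exact (Finset.add_sum_erase _ F hc₀).symm
    have hc0N : F c₀ ∈ N := by
      rw [eq_sub_of_add_eq hsplit.symm]
      exact Submodule.sub_mem _ hmN (Submodule.sum_mem _ hothers)
    have hdisj := g.isInternal.submodule_iSupIndep (i := fun i => ((c₀ : Fin n →₀ ℕ) i : ℤ))
    have hz : F c₀ = 0 := (Submodule.disjoint_def.1 hdisj) _ (hcomp c₀ hc₀) hc0N
    apply mem_support_iff.1 hc₀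
    have hz2 := congrArg (fun x : SdepthProof.Mk K n k => coeff c₀ (x : S)) hz
    simp only [hFc c₀ hc₀] at hz2
    simpa using hz2
  obtain ⟨c₀, hc₀⟩ : ∃ c, c ∈ (m:S).support := by
    rcases Finset.eq_empty_or_nonempty (m:S).support with h | h
    · exact absurd (Subtype.ext ((support_eq_empty).1 h)) hm0
    · exact h
  have hsingle : (m:S).support = {c₀} := by
    apply Finset.eq_singleton_iff_unique_mem.2
    refine ⟨hc₀, fun c hc => iota_inj ((key c hc).trans (key c₀ hc₀).symm)⟩
  refine ⟨c₀, coeff c₀ (m:S), (mem_support_iff).1 hc₀, ?_, deg_of_mem_maxIdeal_pow m.2 c₀ hc₀⟩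
  conv_lhs => rw [as_sum (m:S), hsingle, Finset.sum_singleton]


lemma sum_single_apply {n : ℕ} (i : Fin n) (v : ℕ) :
    ∑ j, (Finsupp.single i v) j = v := by
  simp [Finsupp.single_apply]

lemma sum_add_apply {n : ℕ} (a b : Fin n →₀ ℕ) :
    ∑ j, (a + b) j = (∑ j, a j) + ∑ j, b j := by
  simp [Finsupp.add_apply, Finset.sum_add_distrib]

lemma sub_single_add {n : ℕ} {b : Fin n →₀ ℕ} {j : Fin n} (hj : b j ≠ 0) :
    (b - Finsupp.single j 1) + Finsupp.single j 1 = b := by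
  ext t
  rcases eq_or_ne t j with rfl | ht
  · simp [Nat.sub_add_cancel (Nat.one_le_iff_ne_zero.2 hj)]
  · simp [Finsupp.single_apply, Ne.symm ht]

lemma add_sub_single {n : ℕ} (a : Fin n →₀ ℕ) (j : Fin n) :
    (a + Finsupp.single j 1) - Finsupp.single j 1 = a := by
  ext t
  rcases eq_or_ne t j with rfl | ht
  · simp
  · simp [Finsupp.single_apply, Ne.symm ht]

lemma counting {n k d r : ℕ} (hn : 0 < n) (hk : 0 < k)
    (c : Fin r → (Fin n →₀ ℕ)) (Z : Fin r → Finset (Fin n))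
    (hdeg : ∀ i, k ≤ ∑ j, c i j)
    (cover : ∀ b : Fin n →₀ ℕ, k ≤ ∑ j, b j →
      ∃ (i : Fin r) (e : Fin n →₀ ℕ), ↑e.support ⊆ (Z i : Set (Fin n)) ∧ b = c i + e)
    (disj : ∀ (i j : Fin r), i ≠ j → ∀ (b e e' : Fin n →₀ ℕ),
      ↑e.support ⊆ (Z i : Set (Fin n)) → ↑e'.support ⊆ (Z j : Set (Fin n)) →
      b = c i + e → b = c j + e' → False)
    (hd : ∀ i, d ≤ (Z i).card) :
    d * (k + 1) ≤ n + k := by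
  classical
  set A : Finset (Fin n →₀ ℕ) := Finset.finsuppAntidiag Finset.univ k with hA
  set B : Finset (Fin n →₀ ℕ) := Finset.finsuppAntidiag Finset.univ (k+1) with hB
  have memA : ∀ {a : Fin n →₀ ℕ}, a ∈ A ↔ ∑ j, a j = k := by
    intro a
    rw [hA, Finset.mem_finsuppAntidiag]
    simp
  have memB : ∀ {b : Fin n →₀ ℕ}, b ∈ B ↔ ∑ j, b j = k + 1 := by
    intro b
    rw [hB, Finset.mem_finsuppAntidiag]
    simp
  -- each a ∈ A is a base point
  have hcov : ∀ a : {x // x ∈ A}, ∃ i : Fin r, (a : Fin n →₀ ℕ) = c i := by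
    rintro ⟨a, ha⟩
    obtain ⟨i, e, he, hae⟩ := cover a (le_of_eq (memA.1 ha).symm)
    have hsum : ∑ j, a j = (∑ j, c i j) + ∑ j, e j := by rw [hae]; exact sum_add_apply _ _
    have hz : ∑ j, e j = 0 := by have := hdeg i; have := memA.1 ha; omega
    have he0 : e = 0 := by
      ext t
      exact (Finset.sum_eq_zero_iff.1 hz) t (Finset.mem_univ t)
    exact ⟨i, by show a = c i; rw [hae, he0, add_zero]⟩
  choose ind hind using hcov
  -- the injection into B
  have hkey : ∀ (a : {x // x ∈ A}) {j : Fin n}, j ∈ Z (ind a) →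
      ((a : Fin n →₀ ℕ) + Finsupp.single j 1) ∈ B ∧
      ((a : Fin n →₀ ℕ) + Finsupp.single j 1) = c (ind a) + Finsupp.single j 1 := by
    intro a j hj
    constructor
    · rw [memB, sum_add_apply, sum_single_apply, memA.1 a.2]
    · rw [← hind a]
  have hsupp_single : ∀ (j : Fin n) (i : Fin r), j ∈ Z i →
      ↑(Finsupp.single j (1:ℕ)).support ⊆ (Z i : Set (Fin n)) := by
    intro j i hj
    intro t ht
    have := Finsupp.support_single_subset (a := j) (b := (1:ℕ)) ht
    simp only [Finset.mem_singleton] at this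
    subst this
    exact hj
  have hcard1 : d * A.card ≤ B.card := by
    have hsub : (A.attach.biUnion fun a => (Z (ind a)).image
        (fun j => (a : Fin n →₀ ℕ) + Finsupp.single j 1)) ⊆ B := by
      intro b hb
      rw [Finset.mem_biUnion] at hb
      obtain ⟨a, -, hb⟩ := hb
      rw [Finset.mem_image] at hb
      obtain ⟨j, hj, rfl⟩ := hb
      exact (hkey a hj).1
    have hdisj : ∀ a ∈ A.attach, ∀ a' ∈ A.attach, a ≠ a' →
        Disjoint ((Z (ind a)).image (fun j => (a : Fin n →₀ ℕ) + Finsupp.single j 1))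
          ((Z (ind a')).image (fun j => (a' : Fin n →₀ ℕ) + Finsupp.single j 1)) := by
      intro a _ a' _ hne
      rw [Finset.disjoint_left]
      rintro b hb hb'
      rw [Finset.mem_image] at hb hb'
      obtain ⟨j, hj, hbj⟩ := hb
      obtain ⟨j', hj', hbj'⟩ := hb'
      have hii : ind a ≠ ind a' := by
        intro h
        apply hne
        apply Subtype.ext
        rw [hind a, hind a', h]
      exact disj (ind a) (ind a') hii b _ _ (hsupp_single j _ hj) (hsupp_single j' _ hj')
        (by rw [← hbj, (hkey a hj).2]) (by rw [← hbj', (hkey a' hj').2])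
    calc d * A.card = ∑ _a ∈ A.attach, d := by
          rw [Finset.sum_const, Finset.card_attach, smul_eq_mul, mul_comm]
      _ ≤ ∑ a ∈ A.attach, ((Z (ind a)).image
            (fun j => (a : Fin n →₀ ℕ) + Finsupp.single j 1)).card := by
          apply Finset.sum_le_sum
          intro a _
          rw [Finset.card_image_of_injective _ (fun x y hxy => by
            have := add_left_cancel hxy
            exact Finsupp.single_left_injective (one_ne_zero) this)]
          exact hd (ind a)
      _ = (A.attach.biUnion fun a => (Z (ind a)).image
            (fun j => (a : Fin n →₀ ℕ) + Finsupp.single j 1)).card :=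
          (Finset.card_biUnion hdisj).symm
      _ ≤ B.card := Finset.card_le_card hsub
  -- the double counting identity
  have hcard2 : (k + 1) * B.card = (k + n) * A.card := by
    have hj : ∀ j : Fin n, ∑ b ∈ B, b j = ∑ a ∈ A, (a j + 1) := by
      intro j
      have h1 : ∑ b ∈ B, b j = ∑ b ∈ B.filter (fun b => b j ≠ 0), b j :=
        (Finset.sum_filter_ne_zero B).symm
      rw [h1]
      refine (Finset.sum_nbij' (fun b => b - Finsupp.single j 1)
        (fun a => a + Finsupp.single j 1) ?_ ?_ ?_ ?_ ?_)
      · intro b hb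
        rw [Finset.mem_filter] at hb
        rw [memA]
        have hsub := sub_single_add hb.2
        have h2 := sum_add_apply (b - Finsupp.single j 1) (Finsupp.single j 1)
        rw [hsub, sum_single_apply, memB.1 hb.1] at h2
        beta_reduce
        omega
      · intro a ha
        rw [Finset.mem_filter]
        constructor
        · rw [memB, sum_add_apply, sum_single_apply, memA.1 ha]
        · simp
      · intro b hb
        rw [Finset.mem_filter] at hb
        exact sub_single_add hb.2
      · intro a _
        exact add_sub_single a j
      · intro b hb
        rw [Finset.mem_filter] at hb
        have h3 : (b - Finsupp.single j 1 : Fin n →₀ ℕ) j = b j - 1 := by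
          rw [Finsupp.tsub_apply]
          simp
        have h4 : b j ≠ 0 := hb.2
        beta_reduce
        omega
    have hLHS : ∑ b ∈ B, ∑ j, b j = (k + 1) * B.card := by
      rw [Finset.sum_congr rfl (fun b hb => memB.1 hb), Finset.sum_const, smul_eq_mul, mul_comm]
    have hRHS : ∑ a ∈ A, ∑ j, (a j + 1) = (k + n) * A.card := by
      have : ∀ a ∈ A, ∑ j, (a j + 1) = k + n := by
        intro a ha
        rw [Finset.sum_add_distrib, memA.1 ha]
        simp
      rw [Finset.sum_congr rfl this, Finset.sum_const, smul_eq_mul, mul_comm]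
    calc (k+1) * B.card = ∑ b ∈ B, ∑ j, b j := hLHS.symm
      _ = ∑ j, ∑ b ∈ B, b j := Finset.sum_comm
      _ = ∑ j, ∑ a ∈ A, (a j + 1) := Finset.sum_congr rfl fun j _ => hj j
      _ = ∑ a ∈ A, ∑ j, (a j + 1) := Finset.sum_comm
      _ = (k + n) * A.card := hRHS
  have hApos : 0 < A.card := by
    have hmem : (Finsupp.single (⟨0, hn⟩ : Fin n) k) ∈ A := by
      rw [memA]; exact sum_single_apply _ _
    exact Finset.card_pos.2 ⟨_, hmem⟩
  have h3 : ((k+1) * d) * A.card ≤ (k + n) * A.card := by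
    calc ((k+1)*d) * A.card = (k+1) * (d * A.card) := by ring
      _ ≤ (k+1) * B.card := Nat.mul_le_mul_left _ hcard1
      _ = (k+n) * A.card := hcard2
  have h4 : (k+1) * d ≤ k + n := Nat.le_of_mul_le_mul_right h3 hApos
  calc d * (k+1) = (k+1) * d := mul_comm _ _
    _ ≤ k + n := h4
    _ = n + k := add_comm _ _

end SdepthProof

namespace SdepthProof

variable {K : Type*} [Field K] {n k : ℕ}

local notation "S" => MvPolynomial (Fin n) K

lemma mem_stanleySpace_iff {m x : SdepthProof.Mk K n k} {Z : Finset (Fin n)} :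
    x ∈ stanleySpace (K := K) m Z ↔
      ∃ p ∈ supported K (↑Z : Set (Fin n)), p • m = x := by
  simp only [stanleySpace, Submodule.mem_map, Subalgebra.mem_toSubmodule,
    LinearMap.coe_restrictScalars, LinearMap.toSpanSingleton_apply]

/-- the monomial `X^b` as an element of `𝔪^k`. -/
noncomputable def Xb (b : Fin n →₀ ℕ) (hb : k ≤ ∑ j, b j) : SdepthProof.Mk K n k :=
  ⟨monomial b 1, monomial_mem_maxIdeal_pow hb 1⟩

lemma Xb_ne_zero (b : Fin n →₀ ℕ) (hb : k ≤ ∑ j, b j) : Xb (K := K) b hb ≠ 0 := by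
  intro h
  have : (monomial b (1:K)) = 0 := congrArg Subtype.val h
  rw [monomial_eq_zero] at this
  exact one_ne_zero this

lemma sdepth_dec_le (hn : 0 < n) (hk : 0 < k)
    (g : MultiGrading K n (SdepthProof.Mk K n k))
    (hg : ∀ (c : Fin n →₀ ℕ) (hc : monomial c (1 : K) ∈ maxIdeal K n ^ k),
      (⟨monomial c (1 : K), hc⟩ : SdepthProof.Mk K n k) ∈ g.deg (fun i => (c i : ℤ)))
    (D : StanleyDecomposition g) :
    D.sdepth ≤ (((n + k) / (k + 1) : ℕ) : ℕ∞) := by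
  classical
  -- each elt is a nonzero monomial
  have hne : ∀ i, D.elt i ≠ 0 := by
    intro i h
    refine one_ne_zero (D.free i 1 (one_mem _) ?_)
    rw [h, smul_zero]
  have H : ∀ i, ∃ (c : Fin n →₀ ℕ) (ρ : K), ρ ≠ 0 ∧
      ((D.elt i : SdepthProof.Mk K n k) : S) = monomial c ρ ∧ k ≤ ∑ t, c t := by
    intro i
    obtain ⟨a, ha⟩ := D.homogeneous i
    exact homog_is_monomial g hg ha (hne i)
  choose c ρ hρ helt hdeg using H
  -- r > 0
  have hr : 0 < D.r := by
    rcases Nat.eq_zero_or_pos D.r with h | h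
    · exfalso
      have hempty : IsEmpty (Fin D.r) := by rw [h]; exact Fin.isEmpty'
      have htop := D.isInternal.submodule_iSup_eq_top
      rw [iSup_of_empty] at htop
      have hx : (Xb (K := K) (Finsupp.single (⟨0, hn⟩ : Fin n) k)
          (le_of_eq (sum_single_apply _ _).symm)) ∈ (⊥ : Submodule K (SdepthProof.Mk K n k)) := by
        rw [htop]; trivial
      exact Xb_ne_zero _ _ (Submodule.mem_bot _ |>.1 hx)
    · exact h
  -- membership of monomials in the pieces
  have hmem : ∀ (i : Fin D.r) (b : Fin n →₀ ℕ) (hb : k ≤ ∑ j, b j) (e : Fin n →₀ ℕ),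
      ↑e.support ⊆ ((D.Z i) : Set (Fin n)) → b = c i + e →
      Xb (K := K) b hb ∈ stanleySpace (K := K) (D.elt i) (D.Z i) := by
    intro i b hb e he hbe
    rw [mem_stanleySpace_iff]
    refine ⟨monomial e (ρ i)⁻¹, ?_, ?_⟩
    · rw [mem_supported, vars_monomial (inv_ne_zero (hρ i))]
      exact he
    · apply Subtype.ext
      show monomial e (ρ i)⁻¹ * (D.elt i : S) = monomial b 1
      rw [helt i, monomial_mul, inv_mul_cancel₀ (hρ i), hbe, add_comm]
  -- disjointness hypothesis
  have hdisjI : ∀ (i j : Fin D.r), i ≠ j → ∀ (b e e' : Fin n →₀ ℕ),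
      ↑e.support ⊆ ((D.Z i) : Set (Fin n)) → ↑e'.support ⊆ ((D.Z j) : Set (Fin n)) →
      b = c i + e → b = c j + e' → False := by
    intro i j hij b e e' he he' hbe hbe'
    have hb : k ≤ ∑ t, b t := by
      rw [hbe, sum_add_apply]
      exact le_trans (hdeg i) (Nat.le_add_right _ _)
    have h1 := hmem i b hb e he hbe
    have h2 := hmem j b hb e' he' hbe'
    have hd := D.isInternal.submodule_iSupIndep.pairwiseDisjoint hij
    have := Submodule.disjoint_def.1 hd _ h1 h2
    exact Xb_ne_zero b hb this
  -- covering hypothesis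
  have hcovI : ∀ b : Fin n →₀ ℕ, k ≤ ∑ j, b j →
      ∃ (i : Fin D.r) (e : Fin n →₀ ℕ),
        ↑e.support ⊆ ((D.Z i) : Set (Fin n)) ∧ b = c i + e := by
    intro b hb
    by_contra h
    push_neg at h
    set φ : SdepthProof.Mk K n k →ₗ[K] K :=
      (lcoeff K b).comp (((maxIdeal K n ^ k).subtype).restrictScalars K) with hφ
    have hker : ∀ i, stanleySpace (K := K) (D.elt i) (D.Z i) ≤ LinearMap.ker φ := by
      intro i x hx
      rw [mem_stanleySpace_iff] at hx
      obtain ⟨p, hp, rfl⟩ := hx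
      rw [LinearMap.mem_ker, hφ]
      show lcoeff K b ((p • D.elt i : SdepthProof.Mk K n k) : S) = 0
      rw [coe_smulS, helt i, lcoeff_apply]
      by_contra hc
      have hbsupp : b ∈ (p * monomial (c i) (ρ i)).support := mem_support_iff.2 hc
      have := MvPolynomial.support_mul p (monomial (c i) (ρ i)) hbsupp
      rw [Finset.mem_add] at this
      obtain ⟨e, hep, c', hc', rfl⟩ := this
      have hc'' : c' = c i := by
        have := support_monomial_subset hc'
        simpa using this
      refine h i e ?_ (by rw [hc'', add_comm])
      intro t ht
      have hvars : t ∈ p.vars := (mem_vars t).2 ⟨e, hep, ht⟩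
      exact (mem_supported.1 hp) hvars
    have htop := D.isInternal.submodule_iSup_eq_top
    have hXb : Xb (K := K) b hb ∈ LinearMap.ker φ := by
      have : Xb (K := K) b hb ∈ (⨆ i, stanleySpace (K := K) (D.elt i) (D.Z i)) := by
        rw [htop]; trivial
      exact iSup_le hker this
    rw [LinearMap.mem_ker, hφ] at hXb
    have : coeff b (monomial b (1:K)) = 0 := hXb
    rw [coeff_monomial, if_pos rfl] at this
    exact one_ne_zero this
  -- minimal cardinality
  have : Nonempty (Fin D.r) := ⟨⟨0, hr⟩⟩
  obtain ⟨i₀, -, hmin⟩ := Finset.exists_min_image Finset.univ (fun i => (D.Z i).card)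
    ⟨⟨0, hr⟩, Finset.mem_univ _⟩
  have hcount := counting hn hk c D.Z hdeg hcovI hdisjI
    (fun i => hmin i (Finset.mem_univ i))
  have hle : (D.Z i₀).card ≤ (n + k) / (k + 1) :=
    (Nat.le_div_iff_mul_le (Nat.succ_pos k)).2 hcount
  calc D.sdepth ≤ ((D.Z i₀).card : ℕ∞) := iInf_le _ i₀
    _ ≤ (((n + k) / (k + 1) : ℕ) : ℕ∞) := by exact_mod_cast hle

end SdepthProof


namespace SdepthProof

/-- the variable set attached to a base exponent. -/
def ZS {n : ℕ} (a : Fin n →₀ ℕ) : Finset (Fin n) :=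
  Finset.univ.filter (fun t => ∀ s ∈ a.support, s ≤ t)

lemma mem_ZS {n : ℕ} {a : Fin n →₀ ℕ} {t : Fin n} :
    t ∈ ZS a ↔ ∀ s ∈ a.support, s ≤ t := by
  simp [ZS]

lemma ZS_card_pos {n : ℕ} (hn : 0 < n) (a : Fin n →₀ ℕ) : 0 < (ZS a).card := by
  refine Finset.card_pos.2 ⟨⟨n-1, by omega⟩, mem_ZS.2 fun s _ => ?_⟩
  rw [Fin.le_def]
  exact Nat.le_sub_one_of_lt s.2

lemma exists_base {n k : ℕ} (b : Fin n →₀ ℕ) (hb : k ≤ ∑ j, b j) :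
    ∃ a e : Fin n →₀ ℕ, (∑ j, a j = k) ∧ b = a + e ∧
      (↑e.support : Set (Fin n)) ⊆ ↑(ZS a) := by
  obtain ⟨m, hm⟩ : ∃ m, ∑ j, b j = k + m := ⟨∑ j, b j - k, by omega⟩
  clear hb
  induction m generalizing b with
  | zero =>
    exact ⟨b, 0, by omega, by simp, by simp⟩
  | succ m ih =>
    have hbne : b.support.Nonempty := by
      rw [Finsupp.support_nonempty_iff]
      intro h
      rw [h] at hm
      simp at hm
    set t₀ := b.support.max' hbne with ht₀
    have hbt₀ : b t₀ ≠ 0 := Finsupp.mem_support_iff.1 (b.support.max'_mem hbne)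
    set b' : Fin n →₀ ℕ := b - Finsupp.single t₀ 1 with hb'def
    have hb' : b' + Finsupp.single t₀ 1 = b := sub_single_add hbt₀
    have hsum' : ∑ j, b' j = k + m := by
      have h2 := sum_add_apply b' (Finsupp.single t₀ 1)
      rw [hb', sum_single_apply] at h2
      omega
    obtain ⟨a, e, ha, hbe, hcond⟩ := ih b' hsum'
    refine ⟨a, e + Finsupp.single t₀ 1, ha, ?_, ?_⟩
    · rw [← hb', hbe, add_assoc]
    · intro t ht
      simp only [Finset.coe_subset, Finset.mem_coe] at *
      rcases Finset.mem_union.1 (Finsupp.support_add ht) with h | h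
      · exact hcond h
      · have htt : t = t₀ := by
          have := Finsupp.support_single_subset h
          simpa using this
        subst htt
        rw [mem_ZS]
        intro s hs
        -- s ∈ a.support ⊆ b.support, and t is the max of b.support
        have has : a s ≠ 0 := Finsupp.mem_support_iff.1 hs
        have hbs : b s ≠ 0 := by
          have h1 : a s ≤ b s := by
            conv_rhs => rw [← hb', hbe]
            simp only [Finsupp.add_apply]
            omega
          omega
        exact Finset.le_max' _ s (Finsupp.mem_support_iff.2 hbs)

lemma base_aux {n k : ℕ} {a a' e e' b : Fin n →₀ ℕ}
    (ha : ∑ j, a j = k) (ha' : ∑ j, a' j = k)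
    (hb : b = a + e) (hb' : b = a' + e')
    (hcond : (↑e.support : Set (Fin n)) ⊆ ↑(ZS a))
    {i₀ : Fin n} (hlt : a i₀ < a' i₀) (hmin : ∀ s, s < i₀ → a s = a' s) : False := by
  have h1 : a i₀ + e i₀ = a' i₀ + e' i₀ := by
    rw [← Finsupp.add_apply, ← Finsupp.add_apply, ← hb, ← hb']
  have he : e i₀ ≠ 0 := by omega
  have hsupp : ∀ s ∈ a.support, s ≤ i₀ :=
    mem_ZS.1 (hcond (Finsupp.mem_support_iff.2 he))
  have hstrict : ∑ j, a j < ∑ j, a' j := by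
    apply Finset.sum_lt_sum
    · intro s _
      rcases lt_trichotomy s i₀ with h | h | h
      · exact le_of_eq (hmin s h)
      · subst h; exact le_of_lt hlt
      · have : a s = 0 := by
          by_contra hz
          exact absurd (hsupp s (Finsupp.mem_support_iff.2 hz)) (not_le.2 h)
        omega
    · exact ⟨i₀, Finset.mem_univ _, hlt⟩
  omega

lemma base_unique {n k : ℕ} {a a' e e' b : Fin n →₀ ℕ}
    (ha : ∑ j, a j = k) (ha' : ∑ j, a' j = k)
    (hb : b = a + e) (hb' : b = a' + e')
    (hcond : (↑e.support : Set (Fin n)) ⊆ ↑(ZS a))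
    (hcond' : (↑e'.support : Set (Fin n)) ⊆ ↑(ZS a')) : a = a' := by
  by_contra hne
  have hex : (Finset.univ.filter (fun i => a i ≠ a' i)).Nonempty := by
    rcases Finset.eq_empty_or_nonempty (Finset.univ.filter (fun i => a i ≠ a' i)) with h | h
    · exfalso
      apply hne
      ext i
      by_contra hi
      exact absurd (Finset.mem_filter.2 ⟨Finset.mem_univ i, hi⟩) (by rw [h]; simp)
    · exact h
  set i₀ := _root_.id ((Finset.univ.filter (fun i => a i ≠ a' i)).min' hex) with hi₀
  have hi₀mem := (Finset.univ.filter (fun i => a i ≠ a' i)).min'_mem hex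
  have hi₀ne : a i₀ ≠ a' i₀ := (Finset.mem_filter.1 hi₀mem).2
  have hmin : ∀ s, s < i₀ → a s = a' s := by
    intro s hs
    by_contra hz
    have : i₀ ≤ s := Finset.min'_le _ s (Finset.mem_filter.2 ⟨Finset.mem_univ s, hz⟩)
    exact absurd hs (not_lt.2 this)
  rcases lt_or_gt_of_ne hi₀ne with h | h
  · exact base_aux ha ha' hb hb' hcond h hmin
  · exact base_aux ha' ha hb' hb hcond' h (fun s hs => (hmin s hs).symm)

end SdepthProof

namespace SdepthProof

variable {K : Type*} [Field K] {n k : ℕ}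

local notation "S" => MvPolynomial (Fin n) K

/-- the elements of `𝔪^k` all of whose monomials lie in `E`. -/
noncomputable def W (E : Set (Fin n →₀ ℕ)) : Submodule K (SdepthProof.Mk K n k) where
  carrier := {m | ↑(m : S).support ⊆ E}
  add_mem' := by
    classical
    intro x y hx hy b hb
    rcases Finset.mem_union.1 (MvPolynomial.support_add (by exact_mod_cast hb)) with h | h
    · exact hx h
    · exact hy h
  zero_mem' := by simp
  smul_mem' := by
    intro r x hx b hb
    have hb2 : b ∈ ((r • x : SdepthProof.Mk K n k) : S).support := by exact_mod_cast hb
    rw [coe_smulK] at hb2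
    exact hx (MvPolynomial.support_smul hb2)

lemma mem_W {E : Set (Fin n →₀ ℕ)} {m : SdepthProof.Mk K n k} :
    m ∈ W (K := K) E ↔ ↑(m : S).support ⊆ E := Iff.rfl

lemma W_mono {E E' : Set (Fin n →₀ ℕ)} (h : E ⊆ E') : W (K := K) (n := n) (k := k) E ≤ W E' :=
  fun _ hm => subset_trans hm h

/-- the exponent set of the Stanley space based at `a`. -/
def Ebase (a : Fin n →₀ ℕ) : Set (Fin n →₀ ℕ) :=
  {b | ∃ e, (↑e.support : Set (Fin n)) ⊆ ↑(ZS a) ∧ b = a + e}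

lemma stanleySpace_le_W {m : SdepthProof.Mk K n k} {Z : Finset (Fin n)}
    {a : Fin n →₀ ℕ} {ρ : K} (hm : (m : S) = monomial a ρ) :
    stanleySpace (K := K) m Z ≤ W {b | ∃ e, (↑e.support : Set (Fin n)) ⊆ ↑Z ∧ b = a + e} := by
  classical
  intro x hx
  rw [mem_stanleySpace_iff] at hx
  obtain ⟨p, hp, rfl⟩ := hx
  rw [mem_W]
  intro b hb
  have hb' : b ∈ (p * monomial a ρ).support := by
    have : ((p • m : SdepthProof.Mk K n k) : S) = p * monomial a ρ := by rw [coe_smulS, hm]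
    rwa [← this]
  have := MvPolynomial.support_mul p (monomial a ρ) hb'
  rw [Finset.mem_add] at this
  obtain ⟨e, hep, c', hc', rfl⟩ := this
  have hc'' : c' = a := by
    have := support_monomial_subset hc'
    simpa using this
  refine ⟨e, ?_, by rw [hc'', add_comm]⟩
  intro t ht
  exact (mem_supported.1 hp) ((mem_vars t).2 ⟨e, hep, ht⟩)

lemma mem_of_monomials (P : Submodule K (SdepthProof.Mk K n k)) (m : SdepthProof.Mk K n k)
    (h : ∀ b (hb : b ∈ (m : S).support),
      (⟨monomial b (coeff b (m : S)),
        monomial_mem_maxIdeal_pow (deg_of_mem_maxIdeal_pow m.2 b hb) _⟩ :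
          SdepthProof.Mk K n k) ∈ P) :
    m ∈ P := by
  classical
  set F : (Fin n →₀ ℕ) → SdepthProof.Mk K n k := fun b =>
    if hb : b ∈ (m : S).support then
      ⟨monomial b (coeff b (m : S)),
        monomial_mem_maxIdeal_pow (deg_of_mem_maxIdeal_pow m.2 b hb) _⟩ else 0 with hF
  have hFc : ∀ b ∈ (m : S).support, ((F b : SdepthProof.Mk K n k) : S)
      = monomial b (coeff b (m : S)) := by
    intro b hb
    simp only [hF]
    rw [dif_pos hb]
  have hsum : m = ∑ b ∈ (m : S).support, F b := by
    apply Subtype.ext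
    push_cast
    rw [Finset.sum_congr rfl hFc]
    exact (support_sum_monomial_coeff (m : S)).symm
  rw [hsum]
  refine Submodule.sum_mem _ fun b hb => ?_
  have : F b = (⟨monomial b (coeff b (m : S)),
      monomial_mem_maxIdeal_pow (deg_of_mem_maxIdeal_pow m.2 b hb) _⟩ :
        SdepthProof.Mk K n k) := by
    simp only [hF]; rw [dif_pos hb]
  rw [this]
  exact h b hb

lemma exists_dec (hn : 0 < n) (hk : 0 < k)
    (g : MultiGrading K n (SdepthProof.Mk K n k))
    (hg : ∀ (c : Fin n →₀ ℕ) (hc : monomial c (1 : K) ∈ maxIdeal K n ^ k),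
      (⟨monomial c (1 : K), hc⟩ : SdepthProof.Mk K n k) ∈ g.deg (fun i => (c i : ℤ))) :
    ∃ D : StanleyDecomposition g, ∀ i, 0 < (D.Z i).card := by
  classical
  set A : Finset (Fin n →₀ ℕ) := Finset.finsuppAntidiag Finset.univ k with hA
  have memA : ∀ {a : Fin n →₀ ℕ}, a ∈ A ↔ ∑ j, a j = k := by
    intro a
    rw [hA, Finset.mem_finsuppAntidiag]
    simp
  set eqv : Fin A.card ≃ {x // x ∈ A} :=
    (Fintype.equivFinOfCardEq (Fintype.card_coe A)).symm with heqv
  have hmemI : ∀ (a : {x // x ∈ A}), monomial ((a : Fin n →₀ ℕ)) (1:K) ∈ maxIdeal K n ^ k :=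
    fun a => monomial_mem_maxIdeal_pow (le_of_eq (memA.1 a.2).symm) 1
  refine ⟨⟨A.card, fun i => ⟨monomial ((eqv i : Fin n →₀ ℕ)) 1, hmemI _⟩,
    fun i => ZS ((eqv i : Fin n →₀ ℕ)), ?_, ?_, ?_⟩, fun i => ZS_card_pos hn _⟩
  · intro i
    exact ⟨_, hg _ (hmemI (eqv i))⟩
  · intro i p _ hpe
    have h0 : p * monomial ((eqv i : Fin n →₀ ℕ)) (1:K) = 0 := congrArg Subtype.val hpe
    rcases mul_eq_zero.1 h0 with h | h
    · exact h
    · rw [monomial_eq_zero] at h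
      exact absurd h one_ne_zero
  · rw [DirectSum.isInternal_submodule_iff_iSupIndep_and_iSup_eq_top]
    constructor
    · intro i
      have h1 : stanleySpace (K := K)
          (⟨monomial ((eqv i : Fin n →₀ ℕ)) 1, hmemI _⟩ : SdepthProof.Mk K n k)
          (ZS ((eqv i : Fin n →₀ ℕ))) ≤ W (Ebase ((eqv i : Fin n →₀ ℕ))) :=
        stanleySpace_le_W rfl
      have h2 : (⨆ (j) (_ : j ≠ i), stanleySpace (K := K)
          (⟨monomial ((eqv j : Fin n →₀ ℕ)) 1, hmemI _⟩ : SdepthProof.Mk K n k)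
          (ZS ((eqv j : Fin n →₀ ℕ)))) ≤
            W (⋃ (j) (_ : j ≠ i), Ebase ((eqv j : Fin n →₀ ℕ))) := by
        refine iSup₂_le fun j hj => le_trans (stanleySpace_le_W rfl)
          (W_mono (Set.subset_iUnion₂ (s := fun j _ => Ebase ((eqv j : Fin n →₀ ℕ))) j hj))
      rw [Submodule.disjoint_def]
      intro x hxi hxj
      have hx1 := h1 hxi
      have hx2 := h2 hxj
      rw [mem_W] at hx1 hx2
      have hempty : ∀ b ∈ (x : S).support, False := by
        intro b hb
        obtain ⟨e, he, hbe⟩ := hx1 hb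
        have := hx2 hb
        rw [Set.mem_iUnion₂] at this
        obtain ⟨j, hj, e', he', hbe'⟩ := this
        have hbase : ((eqv i : Fin n →₀ ℕ)) = ((eqv j : Fin n →₀ ℕ)) :=
          base_unique (memA.1 (eqv i).2) (memA.1 (eqv j).2) hbe hbe' he he'
        exact hj (eqv.injective (Subtype.ext hbase)).symm
      have hx0 : (x : S) = 0 := by
        rw [← support_eq_empty]
        rcases Finset.eq_empty_or_nonempty (x : S).support with h | h
        · exact h
        · obtain ⟨b, hb⟩ := h
          exact absurd (hempty b hb) (by simp)
      exact Subtype.ext hx0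
    · rw [eq_top_iff]
      intro m _
      apply mem_of_monomials
      intro b hb
      have hbk : k ≤ ∑ j, b j := deg_of_mem_maxIdeal_pow m.2 b hb
      obtain ⟨a, e, ha, hbe, hcond⟩ := exists_base b hbk
      have haA : a ∈ A := memA.2 ha
      obtain ⟨i, hieq⟩ : ∃ i, eqv i = ⟨a, haA⟩ := ⟨eqv.symm _, Equiv.apply_symm_apply _ _⟩
      have heq : ((eqv i : Fin n →₀ ℕ)) = a := by rw [hieq]
      apply Submodule.mem_iSup_of_mem i
      rw [mem_stanleySpace_iff]
      refine ⟨monomial e (coeff b (m : S)), ?_, ?_⟩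
      · rw [mem_supported, vars_monomial (mem_support_iff.1 hb)]
        beta_reduce
        rw [heq]
        exact hcond
      · apply Subtype.ext
        show monomial e (coeff b (m : S)) * monomial ((eqv i : Fin n →₀ ℕ)) 1
          = monomial b (coeff b (m : S))
        rw [monomial_mul, mul_one, heq, add_comm, ← hbe]

end SdepthProof

/-- Let `n, k` be positive integers and `a = ⌈n/(k+1)⌉`
(`= (n+k)/(k+1)` with natural division).  Then `sdepth (𝔪^k) ≤ a`, where
`𝔪 = (x₁,…,xₙ) ⊆ K[x₁,…,xₙ]` (with its natural multigrading, in which every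
monomial of `𝔪^k` is homogeneous of its own multidegree).  In particular, if
`k ≥ n - 1` then `sdepth (𝔪^k) = 1`. -/
theorem sdepth_maxIdeal_pow_le {K : Type*} [Field K] {n k : ℕ} (hn : 0 < n) (hk : 0 < k)
    (g : MultiGrading K n ↥(maxIdeal K n ^ k))
    (hg : ∀ (c : Fin n →₀ ℕ) (hc : monomial c (1 : K) ∈ maxIdeal K n ^ k),
      (⟨monomial c (1 : K), hc⟩ : ↥(maxIdeal K n ^ k)) ∈ g.deg (fun i => (c i : ℤ))) :
    stanleyDepth g ≤ (((n + k) / (k + 1) : ℕ) : ℕ∞) ∧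
      (n - 1 ≤ k → stanleyDepth g = 1) := by
  have hupper : stanleyDepth g ≤ (((n + k) / (k + 1) : ℕ) : ℕ∞) :=
    iSup_le fun D => SdepthProof.sdepth_dec_le hn hk g hg D
  refine ⟨hupper, fun hnk => ?_⟩
  have hdiv : (n + k) / (k + 1) = 1 :=
    Nat.div_eq_of_lt_le (by omega) (by omega)
  apply le_antisymm
  · calc stanleyDepth g ≤ (((n + k) / (k + 1) : ℕ) : ℕ∞) := hupper
      _ = 1 := by rw [hdiv]; exact Nat.cast_one
  · obtain ⟨D, hD⟩ := SdepthProof.exists_dec hn hk g hg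
    have h1 : (1 : ℕ∞) ≤ D.sdepth := by
      refine le_iInf fun i => ?_
      exact_mod_cast hD i
    exact le_trans h1 (le_iSup (fun D : StanleyDecomposition g => D.sdepth) D)
end Helpers
end

section
/- Let $n,k$ be positive integers, $P$ the set of monomials $u\in\mathbf{m}^k$ dividing $(x_1\cdots x_n)^k$, partially ordered by divisibility, and suppose $P=\bigcup_{i=1}^r[x^{c_i},x^{d_i}]$ is a partition of $P$ into disjoint intervals such that $\rho(x^{d_i})\ge a+1$ for all $i$, where $\rho(u)=|\{j: x_j^k \text{ divides } u\}|$. Then, denoting by $\alpha_d$ the number of degree-$d$ elements of $P$, one has $\alpha_{k+1}\ge na+(\alpha_k-n)(a+1)$. -/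
/-- Identify monomials `u` dividing `(x₁⋯xₙ)^k` with tuples
`u : Fin n → Fin (k+1)` (exponent vectors), ordered by divisibility (the pointwise
order), and let `P` be the poset of such monomials of degree `≥ k` (the monomials of
`𝔪^k` dividing `(x₁⋯xₙ)^k`).  Suppose `P = ⋃ᵢ [loᵢ, hiᵢ]` is a partition of `P` into
disjoint intervals (every `u ∈ P` lies in exactly one interval, and each `loᵢ ∈ P`)
such that `ρ(hiᵢ) ≥ a + 1` for all `i`, where `ρ(u) = #{j : xⱼ^k ∣ u}`.  Then,
with `α_d` the number of degree-`d` elements of `P`,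
`α_(k+1) ≥ n·a + (α_k - n)·(a+1)`. -/
theorem interval_partition_layer_count (n k a r : ℕ) (hn : 0 < n) (hk : 0 < k)
    (lo hi : Fin r → (Fin n → Fin (k + 1)))
    (hloP : ∀ i, k ≤ ∑ j, (lo i j : ℕ))
    (hlohi : ∀ i, lo i ≤ hi i)
    (hpart : ∀ u : Fin n → Fin (k + 1), k ≤ ∑ j, (u j : ℕ) →
      ∃! i, lo i ≤ u ∧ u ≤ hi i)
    (hrho : ∀ i, a + 1 ≤ (Finset.univ.filter fun j => (hi i j : ℕ) = k).card) :
    (n : ℤ) * a +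
        (((Finset.univ.filter fun u : Fin n → Fin (k + 1) =>
            ∑ j, (u j : ℕ) = k).card : ℤ) - n) * (a + 1) ≤
      ((Finset.univ.filter fun u : Fin n → Fin (k + 1) =>
          ∑ j, (u j : ℕ) = k + 1).card : ℤ) := by
  classical
  set Sk := Finset.univ.filter fun u : Fin n → Fin (k + 1) => ∑ j, (u j : ℕ) = k with hSk
  set Sk1 := Finset.univ.filter fun u : Fin n → Fin (k + 1) => ∑ j, (u j : ℕ) = k + 1 with hSk1
  suffices h : (a + 1) * Sk.card ≤ Sk1.card + n by
    have h' : ((a : ℤ) + 1) * Sk.card ≤ (Sk1.card : ℤ) + n := by exact_mod_cast h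
    nlinarith [h']
  -- increment function
  set incr : (Fin n → Fin (k + 1)) → Fin n → (Fin n → Fin (k + 1)) :=
    fun u j => Function.update u j ⟨min ((u j : ℕ) + 1) k, by omega⟩ with hincr
  have incr_self : ∀ u j, (u j : ℕ) < k → ((incr u j) j : ℕ) = (u j : ℕ) + 1 := by
    intro u j h
    simp only [hincr, Function.update_self]
    omega
  have incr_ne : ∀ u j j', j' ≠ j → (incr u j) j' = u j' := by
    intro u j j' h
    simp only [hincr, Function.update_of_ne h]
  -- lo of interval containing a degree-k element equals it
  have lo_eq : ∀ i (u : Fin n → Fin (k + 1)), ∑ j, (u j : ℕ) = k → lo i ≤ u → lo i = u := by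
    intro i u hu hle
    have hle' : ∀ j ∈ Finset.univ, (lo i j : ℕ) ≤ (u j : ℕ) := fun j _ => hle j
    have hsum : ∑ j, (lo i j : ℕ) = ∑ j, (u j : ℕ) :=
      le_antisymm (Finset.sum_le_sum hle') (by rw [hu]; exact hloP i)
    funext j
    exact Fin.ext ((Finset.sum_eq_sum_iff_of_le hle').mp hsum j (Finset.mem_univ j))
  have exists_lo : ∀ u : Fin n → Fin (k + 1), ∑ j, (u j : ℕ) = k →
      ∃ i, lo i = u ∧ u ≤ hi i := by
    intro u hu
    obtain ⟨i, ⟨h1, h2⟩, _⟩ := hpart u (le_of_eq hu.symm)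
    exact ⟨i, lo_eq i u hu h1, h2⟩
  -- the index sets and image sets
  set J : (Fin n → Fin (k + 1)) → Finset (Fin n) :=
    fun u => Finset.univ.filter fun j => ∃ i, lo i = u ∧ (u j : ℕ) < (hi i j : ℕ) with hJ
  set T : (Fin n → Fin (k + 1)) → Finset (Fin n → Fin (k + 1)) :=
    fun u => (J u).image (incr u) with hT
  have mem_J : ∀ u j, j ∈ J u ↔ ∃ i, lo i = u ∧ (u j : ℕ) < (hi i j : ℕ) := by
    intro u j; simp [hJ]
  have J_lt : ∀ u j, j ∈ J u → (u j : ℕ) < k := by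
    intro u j hj
    obtain ⟨i, _, hlt⟩ := (mem_J u j).mp hj
    have := (hi i j).isLt
    omega
  have card_T : ∀ u, (T u).card = (J u).card := by
    intro u
    apply Finset.card_image_of_injOn
    intro j hj j' hj' heq
    by_contra hne
    have h1 : ((incr u j) j : ℕ) = (u j : ℕ) + 1 := incr_self u j (J_lt u j hj)
    have h2 : (incr u j') j = u j := incr_ne u j' j hne
    rw [heq, h2] at h1
    omega
  -- degree of elements of T u
  have incr_deg : ∀ u j, (u j : ℕ) < k →
      ∑ j', ((incr u j) j' : ℕ) = (∑ j', (u j' : ℕ)) + 1 := by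
    intro u j h
    rw [← Finset.sum_erase_add _ _ (Finset.mem_univ j)]
    have h1 : ∀ j' ∈ Finset.univ.erase j, ((incr u j) j' : ℕ) = (u j' : ℕ) := by
      intro j' hj'
      rw [incr_ne u j j' (Finset.ne_of_mem_erase hj')]
    have h2 : ∑ j'' ∈ Finset.univ.erase j, (u j'' : ℕ) + (u j : ℕ) = ∑ j'', (u j'' : ℕ) :=
      Finset.sum_erase_add _ _ (Finset.mem_univ j)
    rw [Finset.sum_congr rfl h1, incr_self u j h]
    omega
  have le_incr : ∀ u j, u ≤ incr u j := by
    intro u j j'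
    by_cases h : j' = j
    · subst h
      simp only [hincr, Function.update_self, Fin.le_def]
      have := (u j').isLt
      omega
    · rw [incr_ne u j j' h]
  have incr_le : ∀ u j (v : Fin n → Fin (k + 1)), (u j : ℕ) < (v j : ℕ) → u ≤ v →
      incr u j ≤ v := by
    intro u j v hj huv j'
    by_cases h : j' = j
    · subst h
      simp only [hincr, Function.update_self, Fin.le_def]
      omega
    · rw [incr_ne u j j' h]; exact huv j'
  -- membership of T u elements in intervals
  have T_mem : ∀ u, ∑ j, (u j : ℕ) = k → ∀ v ∈ T u,
      (∑ j, (v j : ℕ) = k + 1) ∧ ∃ i, lo i = u ∧ lo i ≤ v ∧ v ≤ hi i := by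
    intro u hu v hv
    obtain ⟨j, hj, rfl⟩ := Finset.mem_image.mp hv
    obtain ⟨i, hloi, hlt⟩ := (mem_J u j).mp hj
    have hjk := J_lt u j hj
    refine ⟨by rw [incr_deg u j hjk, hu], i, hloi, ?_, ?_⟩
    · rw [hloi]; exact le_incr u j
    · exact incr_le u j (hi i) hlt (hloi ▸ hlohi i)
  -- disjointness
  have hdisj : ∀ u ∈ Sk, ∀ u' ∈ Sk, u ≠ u' → Disjoint (T u) (T u') := by
    intro u hu u' hu' hne
    rw [Finset.disjoint_left]
    intro v hv hv'
    simp only [hSk, Finset.mem_filter] at hu hu'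
    obtain ⟨hdv, i, hloi, h1, h2⟩ := T_mem u hu.2 v hv
    obtain ⟨_, i', hloi', h1', h2'⟩ := T_mem u' hu'.2 v hv'
    obtain ⟨i₀, _, huniq⟩ := hpart v (by omega)
    have : i = i' := (huniq i ⟨h1, h2⟩).trans (huniq i' ⟨h1', h2'⟩).symm
    exact hne (hloi ▸ this ▸ hloi')
  -- sum of T cards ≤ card Sk1
  have hT_le : ∑ u ∈ Sk, (T u).card ≤ Sk1.card := by
    rw [← Finset.card_biUnion hdisj]
    apply Finset.card_le_card
    intro v hv
    obtain ⟨u, hu, hvT⟩ := Finset.mem_biUnion.mp hv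
    simp only [hSk, Finset.mem_filter] at hu
    obtain ⟨hdv, _⟩ := T_mem u hu.2 v hvT
    simp [hSk1, hdv]
  -- per-element bound
  have per_u : ∀ u ∈ Sk, a + 1 ≤ (T u).card +
      (Finset.univ.filter fun j => (u j : ℕ) = k).card := by
    intro u hu
    simp only [hSk, Finset.mem_filter] at hu
    obtain ⟨i, hloi, hhi⟩ := exists_lo u hu.2
    have hsub : (Finset.univ.filter fun j => (hi i j : ℕ) = k) ⊆
        J u ∪ (Finset.univ.filter fun j => (u j : ℕ) = k) := by
      intro j hj
      simp only [Finset.mem_filter, Finset.mem_univ, true_and] at hj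
      rcases eq_or_lt_of_le (Nat.lt_succ_iff.mp (u j).isLt) with h | h
      · exact Finset.mem_union_right _ (by simp [h])
      · exact Finset.mem_union_left _ ((mem_J u j).mpr ⟨i, hloi, by omega⟩)
    calc a + 1 ≤ (Finset.univ.filter fun j => (hi i j : ℕ) = k).card := hrho i
      _ ≤ (J u ∪ (Finset.univ.filter fun j => (u j : ℕ) = k)).card :=
          Finset.card_le_card hsub
      _ ≤ (J u).card + (Finset.univ.filter fun j => (u j : ℕ) = k).card :=
          Finset.card_union_le _ _
      _ = (T u).card + _ := by rw [card_T]
  -- sum of pure-power indicators ≤ n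
  have hsum_c : ∑ u ∈ Sk, (Finset.univ.filter fun j => (u j : ℕ) = k).card ≤ n := by
    have hform : ∀ u : Fin n → Fin (k + 1),
        (Finset.univ.filter fun j => (u j : ℕ) = k).card
          = ∑ j : Fin n, if (u j : ℕ) = k then 1 else 0 := by
      intro u; rw [Finset.card_filter]
    simp_rw [hform]
    rw [Finset.sum_comm]
    have hj1 : ∀ j : Fin n, (∑ u ∈ Sk, if (u j : ℕ) = k then 1 else 0) ≤ 1 := by
      intro j
      rw [← Finset.card_filter]
      apply Finset.card_le_one.mpr
      intro u hu u' hu'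
      simp only [hSk, Finset.mem_filter, Finset.mem_univ, true_and] at hu hu'
      have key : ∀ v : Fin n → Fin (k + 1), (∑ j'', (v j'' : ℕ)) = k → (v j : ℕ) = k →
          ∀ j', (v j' : ℕ) = if j' = j then k else 0 := by
        intro v hv hvj j'
        have hsplit : ∑ j'' ∈ Finset.univ.erase j, (v j'' : ℕ) + (v j : ℕ)
            = ∑ j'', (v j'' : ℕ) := Finset.sum_erase_add _ _ (Finset.mem_univ j)
        have hz : ∑ j'' ∈ Finset.univ.erase j, (v j'' : ℕ) = 0 := by omega
        by_cases h : j' = j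
        · simp [h, hvj]
        · have : (v j' : ℕ) = 0 :=
            Finset.sum_eq_zero_iff.mp hz j' (Finset.mem_erase.mpr ⟨h, Finset.mem_univ j'⟩)
          simp [h, this]
      funext j'
      exact Fin.ext ((key u hu.1 hu.2 j').trans (key u' hu'.1 hu'.2 j').symm)
    calc ∑ j : Fin n, (∑ u ∈ Sk, if (u j : ℕ) = k then 1 else 0)
        ≤ ∑ _j : Fin n, 1 := Finset.sum_le_sum fun j _ => hj1 j
      _ = n := by simp
  calc (a + 1) * Sk.card = ∑ _u ∈ Sk, (a + 1) := by
        rw [Finset.sum_const, smul_eq_mul, mul_comm]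
    _ ≤ ∑ u ∈ Sk, ((T u).card + (Finset.univ.filter fun j => (u j : ℕ) = k).card) :=
        Finset.sum_le_sum per_u
    _ = ∑ u ∈ Sk, (T u).card + ∑ u ∈ Sk, (Finset.univ.filter fun j => (u j : ℕ) = k).card :=
        Finset.sum_add_distrib
    _ ≤ Sk1.card + n := add_le_add hT_le hsum_c
end
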